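/- arXiv:2605.12600 — 10 statements merged into one kernel-verified Lean document; each statement's English description precedes it below -/
import Mathlib

section
/- Let L ≥ 1, δ ≥ 1, d ≥ 1 be integers. For all x, y ∈ {0,…,L−1}^d with max_{1≤i≤d} |x_i − y_i| ≤ δ, there exist b ∈ {0,1}^d and n ∈ ℤ^d such that both x and y lie in the subgrid I_{2δn₁−δb₁} × ⋯ × I_{2δn_d−δb_d}. (Among the 2^d shifted partitions of the grid into boxes of side 2δ, at least one contains both points in a single box.) -/
/-- The clamped interval `I_j = {k : max(0,j) ≤ k ≤ min(L-1, j+2δ-1)}`. -/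
def clamped (L δ j : ℤ) : Set ℤ :=
  {k : ℤ | max 0 j ≤ k ∧ k ≤ min (L - 1) (j + 2 * δ - 1)}

/-- The subgrid (box) `I_{2δn₁−δb₁} × ⋯ × I_{2δn_d−δb_d}` of `ℤ^d`. -/
def box (L δ : ℤ) (d : ℕ) (b n : Fin d → ℤ) : Set (Fin d → ℤ) :=
  {x | ∀ i, x i ∈ clamped L δ (2 * δ * n i - δ * b i)}

lemma mem_clamped_of (L δ : ℤ) (hL : 1 ≤ L) (hδ : 1 ≤ δ) (w z : ℤ)
    (hz0 : 0 ≤ z) (hzL : z ≤ L - 1) (hwz : w ≤ z) (hzw : z ≤ w + δ) :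
    z ∈ clamped L δ (2 * δ * (w / δ / 2 + w / δ % 2) - δ * (w / δ % 2)) := by
  have hδ0 : (0 : ℤ) < δ := by linarith
  have h1 : δ * (w / δ) + w % δ = w := Int.mul_ediv_add_emod w δ
  have hr0 : 0 ≤ w % δ := Int.emod_nonneg w (ne_of_gt hδ0)
  have hr1 : w % δ < δ := Int.emod_lt_of_pos w hδ0
  have h2 : 2 * (w / δ / 2) + w / δ % 2 = w / δ := Int.mul_ediv_add_emod (w / δ) 2
  have hj : 2 * δ * (w / δ / 2 + w / δ % 2) - δ * (w / δ % 2) = δ * (w / δ) := by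
    linear_combination δ * h2
  exact ⟨max_le hz0 (by rw [hj]; linarith), le_min hzL (by rw [hj]; linarith)⟩

/-- Any two grid points `x, y ∈ {0,…,L−1}^d` at `ℓ∞`-distance at most `δ` lie in a
common box `I_{2δn₁−δb₁} × ⋯ × I_{2δn_d−δb_d}` for some shift `b ∈ {0,1}^d` and some
`n ∈ ℤ^d`. -/
theorem stmt2 (L δ : ℤ) (hL : 1 ≤ L) (hδ : 1 ≤ δ) (d : ℕ) (hd : 1 ≤ d)
    (x y : Fin d → ℤ)
    (hx : ∀ i, 0 ≤ x i ∧ x i ≤ L - 1) (hy : ∀ i, 0 ≤ y i ∧ y i ≤ L - 1)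
    (hdist : ∀ i, |x i - y i| ≤ δ) :
    ∃ (b n : Fin d → ℤ), (∀ i, b i = 0 ∨ b i = 1) ∧
      x ∈ box L δ d b n ∧ y ∈ box L δ d b n := by
  refine ⟨fun i => min (x i) (y i) / δ % 2,
      fun i => min (x i) (y i) / δ / 2 + min (x i) (y i) / δ % 2,
      fun i => Int.emod_two_eq_zero_or_one _, fun i => ?_, fun i => ?_⟩ <;>
    have habs := abs_le.mp (hdist i)
  · exact mem_clamped_of L δ hL hδ _ _ (hx i).1 (hx i).2 (min_le_left _ _)
      (by rcases le_total (x i) (y i) with h | h <;>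
            simp only [min_eq_left h, min_eq_right h] <;> linarith [habs.2])
  · exact mem_clamped_of L δ hL hδ _ _ (hy i).1 (hy i).2 (min_le_right _ _)
      (by rcases le_total (x i) (y i) with h | h <;>
            simp only [min_eq_left h, min_eq_right h] <;> linarith [habs.1])
end

section
/- Let L ≥ 1 and let p = (r,c) and p' = (r',c') be points of the grid {0,…,L−1}². Then m_Z(p) < m_Z(p') and m_S(p) > m_S(p') hold simultaneously if and only if p' ∈ Λ_p. (The pairs whose relative order is reversed between the Z-pattern and S-pattern orderings are exactly the pairs (p, p') with p' ∈ Λ_p.) -/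
/-- `ρ_r(c) = c` for even `r` and `L−1−c` for odd `r`. -/
def rho (L r c : ℕ) : ℕ := if r % 2 = 0 then c else L - 1 - c

/-- The S-pattern (snake) ordering `m_S(r,c) = L·r + ρ_r(c)` on the grid. -/
def mS (L : ℕ) (p : ℕ × ℕ) : ℕ := L * p.1 + rho L p.1 p.2

/-- The Z-pattern (column-first) ordering `m_Z(r,c) = L·c + (L−1−r)` on the grid. -/
def mZ (L : ℕ) (p : ℕ × ℕ) : ℕ := L * p.2 + (L - 1 - p.1)

/-- `Λ_p`: for `p = (r,c)`, the set of grid points `(r',c') ≠ (r,c)` with `c' ≥ c`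
and `r' < r` if `r` is even, `r' ≤ r` if `r` is odd. -/
def Lam (L : ℕ) (p : ℕ × ℕ) : Set (ℕ × ℕ) :=
  {p' | p'.1 < L ∧ p'.2 < L ∧ p' ≠ p ∧ p.2 ≤ p'.2 ∧
    (if p.1 % 2 = 0 then p'.1 < p.1 else p'.1 ≤ p.1)}

lemma lex_lt {L a b x y : ℕ} (hx : x < L) (hy : y < L) :
    L * a + x < L * b + y ↔ a < b ∨ (a = b ∧ x < y) := by
  constructor
  · intro h
    rcases lt_trichotomy a b with h1 | h1 | h1
    · exact Or.inl h1
    · subst h1; exact Or.inr ⟨rfl, by exact lt_of_add_lt_add_left h⟩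
    · exfalso
      have : L * b + y < L * a + x :=
        calc L * b + y < L * b + L := by omega
          _ = L * (b + 1) := by ring
          _ ≤ L * a := Nat.mul_le_mul_left L h1
          _ ≤ L * a + x := Nat.le_add_right _ _
      omega
  · rintro (h | ⟨rfl, h⟩)
    · calc L * a + x < L * a + L := by omega
        _ = L * (a + 1) := by ring
        _ ≤ L * b := Nat.mul_le_mul_left L h
        _ ≤ L * b + y := Nat.le_add_right _ _
    · exact Nat.add_lt_add_left h _

lemma rho_lt {L r c : ℕ} (hL : 1 ≤ L) (hc : c < L) : rho L r c < L := by
  unfold rho; split <;> omega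

/-- The pairs of grid points whose relative order is reversed between the Z-pattern
and S-pattern orderings are exactly the pairs `(p, p')` with `p' ∈ Λ_p`. -/
theorem stmt5 (L : ℕ) (hL : 1 ≤ L) (p p' : ℕ × ℕ)
    (hp : p.1 < L ∧ p.2 < L) (hp' : p'.1 < L ∧ p'.2 < L) :
    (mZ L p < mZ L p' ∧ mS L p' < mS L p) ↔ p' ∈ Lam L p := by
  obtain ⟨r, c⟩ := p
  obtain ⟨r', c'⟩ := p'
  obtain ⟨hr, hc⟩ := hp
  obtain ⟨hr', hc'⟩ := hp'
  simp only at hr hc hr' hc'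
  have h1 : L - 1 - r < L := by omega
  have h2 : L - 1 - r' < L := by omega
  rw [show mZ L (r, c) = L * c + (L - 1 - r) from rfl,
    show mZ L (r', c') = L * c' + (L - 1 - r') from rfl,
    show mS L (r, c) = L * r + rho L r c from rfl,
    show mS L (r', c') = L * r' + rho L r' c' from rfl,
    lex_lt h1 h2, lex_lt (rho_lt hL hc') (rho_lt hL hc)]
  simp only [Lam, Set.mem_setOf_eq, ne_eq, Prod.mk.injEq, not_and]
  rcases Nat.mod_two_eq_zero_or_one r with h | h <;>
    rcases Nat.mod_two_eq_zero_or_one r' with h' | h' <;>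
      simp only [rho, h, h'] <;> norm_num <;> omega
end

section
/- Let L ≥ 1 be an odd integer. For every function x : {0,…,L−1}² → 𝔽₂ (i.e. ZMod 2), the following identity holds in 𝔽₂: ∑_{r odd, 1≤r≤L−2} ∑_{c=0}^{L−1} ( ∑_{r'=r}^{L−1} x(r',c) ) · ( ∑_{c'=c}^{L−1} ( x(r−1,c') + x(r,c') ) ) = ∑_{p ∈ {0,…,L−1}²} ∑_{p' ∈ Λ_p} x(p)·x(p') + ∑_{r odd, 1≤r≤L−2} ∑_{c=0}^{L−1} x(r,c). (This 𝔽₂ identity is the algebraic core of the fact that the circuit C_{2D}, built from column-and-row parity sums with controlled-Z gates at crossings, applies exactly the CZ phase pattern required to switch between the Z-pattern and S-pattern Jordan–Wigner orderings, up to single-qubit Z gates on odd rows.) -/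
/-- `Λ_p` as a finite set: for `p = (r,c)`, the grid points `(r',c') ≠ (r,c)` with
`c' ≥ c` and `r' < r` if `r` is even, `r' ≤ r` if `r` is odd. -/
def LamF (L : ℕ) (p : ℕ × ℕ) : Finset (ℕ × ℕ) :=
  (Finset.range L ×ˢ Finset.range L).filter fun p' =>
    p' ≠ p ∧ p.2 ≤ p'.2 ∧ (if p.1 % 2 = 0 then p'.1 < p.1 else p'.1 ≤ p.1)

lemma key1 (y : ℕ → ZMod 2) (k : ℕ) :
    ∑ r ∈ (Finset.range (2*k)).filter (fun r => r % 2 = 1), (y (r-1) + y r)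
      = ∑ ρ ∈ Finset.range (2*k), y ρ := by
  induction k with
  | zero => simp
  | succ k ih =>
    have h1 : 2 * (k+1) = (2*k + 1) + 1 := by ring
    rw [h1, Finset.range_add_one, Finset.range_add_one, Finset.filter_insert]
    rw [if_pos (by omega : (2*k+1) % 2 = 1), Finset.filter_insert,
        if_neg (by omega : ¬ (2*k) % 2 = 1)]
    rw [Finset.sum_insert (by simp), Finset.sum_insert (by simp),
        Finset.sum_insert (by simp)]
    have : 2*k+1-1 = 2*k := by omega
    rw [this, ih]
    ring

lemma keyrow (L a : ℕ) (hL : 1 ≤ L) (hLodd : L % 2 = 1) (ha : a < L) (y : ℕ → ZMod 2) :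
    ∑ r ∈ ((Finset.Icc 1 (L-2)).filter (fun r => r % 2 = 1)).filter (fun r => r ≤ a),
        (y (r-1) + y r)
      = ∑ ρ ∈ (Finset.range L).filter (fun ρ => if ρ % 2 = 1 then ρ ≤ a else ρ < a), y ρ := by
  have hset1 : ((Finset.Icc 1 (L-2)).filter (fun r => r % 2 = 1)).filter (fun r => r ≤ a)
      = (Finset.range (2 * ((a+1)/2))).filter (fun r => r % 2 = 1) := by
    ext r
    simp only [Finset.mem_filter, Finset.mem_Icc, Finset.mem_range]
    omega
  have hset2 : (Finset.range L).filter (fun ρ => if ρ % 2 = 1 then ρ ≤ a else ρ < a)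
      = Finset.range (2 * ((a+1)/2)) := by
    ext ρ
    simp only [Finset.mem_filter, Finset.mem_range]
    by_cases h : ρ % 2 = 1 <;> simp [h] <;> omega
  rw [hset1, hset2, key1]

lemma hsetLam (L : ℕ) (hL : 1 ≤ L) (hLodd : L % 2 = 1) (p q : ℕ) (hp : p < L) (hq : q < L) :
    ((Finset.range L).filter (fun ρ => if ρ % 2 = 1 then ρ ≤ p else ρ < p)) ×ˢ
        Finset.Icc q (L-1)
      = if p % 2 = 1 then insert (p, q) (LamF L (p, q)) else LamF L (p, q) := by
  rcases Nat.mod_two_eq_zero_or_one p with hpar | hpar <;>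
    [rw [if_neg (by omega)]; rw [if_pos hpar]] <;>
    ext ⟨a, b⟩ <;>
    simp only [Finset.mem_product, Finset.mem_filter, Finset.mem_range, Finset.mem_Icc,
      Finset.mem_insert, LamF, Prod.ext_iff, ne_eq, Prod.mk.injEq, not_and] <;>
    rcases Nat.mod_two_eq_zero_or_one a with h | h <;>
    simp [h, hpar] <;> omega

lemma inner_lemma (L : ℕ) (hL : 1 ≤ L) (hLodd : L % 2 = 1) (x : ℕ × ℕ → ZMod 2)
    (p q : ℕ) (hp : p < L) (hq : q < L) :
    x (p, q) * (∑ r ∈ ((Finset.Icc 1 (L-2)).filter (fun r => r % 2 = 1)).filter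
        (fun r => r ≤ p), ∑ c' ∈ Finset.Icc q (L-1), (x (r-1, c') + x (r, c')))
      = (∑ v ∈ LamF L (p, q), x (p, q) * x v) + (if p % 2 = 1 then x (p, q) else 0) := by
  have hmulself : ∀ a : ZMod 2, a * a = a := by decide
  rw [Finset.sum_comm]
  have hrow : ∀ c' : ℕ,
      ∑ r ∈ ((Finset.Icc 1 (L-2)).filter (fun r => r % 2 = 1)).filter (fun r => r ≤ p),
          (x (r-1, c') + x (r, c'))
        = ∑ ρ ∈ (Finset.range L).filter (fun ρ => if ρ % 2 = 1 then ρ ≤ p else ρ < p),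
            x (ρ, c') := fun c' => keyrow L p hL hLodd hp (fun ρ => x (ρ, c'))
  simp only [hrow]
  rw [Finset.sum_comm, ← Finset.sum_product, hsetLam L hL hLodd p q hp hq]
  by_cases hpar : p % 2 = 1
  · rw [if_pos hpar, if_pos hpar, Finset.mul_sum, Finset.sum_insert (by simp [LamF]),
      hmulself]
    ring
  · rw [if_neg hpar, if_neg hpar, Finset.mul_sum, add_zero]

/-- The 𝔽₂ identity underlying the fact that the circuit `C_{2D}` applies exactly the
CZ phase pattern needed to switch between the Z-pattern and S-pattern Jordan–Wigner
orderings, up to single-qubit Z gates on odd rows: for odd `L` and any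
`x : {0,…,L−1}² → 𝔽₂`,
`∑_{r odd} ∑_c (∑_{r'≥r} x(r',c)) · (∑_{c'≥c} (x(r−1,c') + x(r,c')))
  = ∑_p ∑_{p' ∈ Λ_p} x(p)·x(p') + ∑_{r odd} ∑_c x(r,c)`. -/
theorem stmt6 (L : ℕ) (hL : 1 ≤ L) (hLodd : L % 2 = 1)
    (x : ℕ × ℕ → ZMod 2) :
    (∑ r ∈ (Finset.Icc 1 (L - 2)).filter (fun r => r % 2 = 1),
      ∑ c ∈ Finset.range L,
        (∑ r' ∈ Finset.Icc r (L - 1), x (r', c)) *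
        (∑ c' ∈ Finset.Icc c (L - 1), (x (r - 1, c') + x (r, c')))) =
    (∑ p ∈ Finset.range L ×ˢ Finset.range L, ∑ p' ∈ LamF L p, x p * x p') +
    (∑ r ∈ (Finset.Icc 1 (L - 2)).filter (fun r => r % 2 = 1),
      ∑ c ∈ Finset.range L, x (r, c)) := by
  classical
  have hIcc : ∀ r : ℕ, Finset.Icc r (L-1) = (Finset.range L).filter (fun r' => r ≤ r') := by
    intro r; ext m
    simp only [Finset.mem_Icc, Finset.mem_filter, Finset.mem_range]
    omega
  -- Step 1: expand the product over r' and move the r-sum inside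
  have step1 :
      (∑ r ∈ (Finset.Icc 1 (L - 2)).filter (fun r => r % 2 = 1),
        ∑ c ∈ Finset.range L,
          (∑ r' ∈ Finset.Icc r (L - 1), x (r', c)) *
          (∑ c' ∈ Finset.Icc c (L - 1), (x (r - 1, c') + x (r, c')))) =
      ∑ r' ∈ Finset.range L, ∑ c ∈ Finset.range L,
        x (r', c) * (∑ r ∈ ((Finset.Icc 1 (L-2)).filter (fun r => r % 2 = 1)).filter
            (fun r => r ≤ r'),
          ∑ c' ∈ Finset.Icc c (L - 1), (x (r - 1, c') + x (r, c'))) := by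
    have e1 : (∑ r ∈ (Finset.Icc 1 (L - 2)).filter (fun r => r % 2 = 1),
        ∑ c ∈ Finset.range L,
          (∑ r' ∈ Finset.Icc r (L - 1), x (r', c)) *
          (∑ c' ∈ Finset.Icc c (L - 1), (x (r - 1, c') + x (r, c')))) =
        ∑ r ∈ (Finset.Icc 1 (L - 2)).filter (fun r => r % 2 = 1),
        ∑ c ∈ Finset.range L, ∑ r' ∈ Finset.range L,
          (if r ≤ r' then x (r', c) *
            (∑ c' ∈ Finset.Icc c (L - 1), (x (r - 1, c') + x (r, c'))) else 0) := by
      refine Finset.sum_congr rfl fun r _ => Finset.sum_congr rfl fun c _ => ?_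
      rw [Finset.sum_mul, hIcc r, Finset.sum_filter]
    rw [e1, Finset.sum_comm]
    refine (Finset.sum_congr rfl fun c _ => Finset.sum_comm).trans ?_
    rw [Finset.sum_comm]
    refine Finset.sum_congr rfl fun r' _ => Finset.sum_congr rfl fun c _ => ?_
    rw [← Finset.sum_filter, Finset.mul_sum]
  rw [step1]
  have step2 : ∀ r' ∈ Finset.range L, ∀ c ∈ Finset.range L,
      x (r', c) * (∑ r ∈ ((Finset.Icc 1 (L-2)).filter (fun r => r % 2 = 1)).filter
            (fun r => r ≤ r'),
          ∑ c' ∈ Finset.Icc c (L - 1), (x (r - 1, c') + x (r, c')))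
        = (∑ v ∈ LamF L (r', c), x (r', c) * x v)
            + (if r' % 2 = 1 then x (r', c) else 0) := by
    intro r' hr' c hc
    exact inner_lemma L hL hLodd x r' c (Finset.mem_range.mp hr') (Finset.mem_range.mp hc)
  rw [Finset.sum_congr rfl fun r' hr' => Finset.sum_congr rfl fun c hc => step2 r' hr' c hc]
  rw [Finset.sum_congr rfl fun r' _ => Finset.sum_add_distrib, Finset.sum_add_distrib]
  congr 1
  · rw [Finset.sum_product]
  · -- diagonal terms
    rw [Finset.sum_comm]
    refine (Finset.sum_congr rfl fun c _ => ?_).trans (Finset.sum_comm)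
    rw [← Finset.sum_filter]
    refine Finset.sum_congr ?_ fun _ _ => rfl
    ext r
    simp only [Finset.mem_filter, Finset.mem_range, Finset.mem_Icc]
    omega
end

section
/- Let L ≥ 1 and let 𝒞 = (C₁,…,C_K) be an interval partition of {0,…,L−1} into consecutive blocks. Then the boustrophedon ordering m_𝒞 is a bijection from the grid {0,…,L−1}² onto {0,…,L²−1}. -/
/-- `ρ^{(w)}_r(c) = c` for even `r` and `w−1−c` for odd `r`. -/
def rhoW (w r c : ℕ) : ℕ := if r % 2 = 0 then c else w - 1 - c

lemma rhoW_lt {w r c : ℕ} (hw : 1 ≤ w) (hc : c < w) : rhoW w r c < w := by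
  unfold rhoW; split <;> omega

lemma rhoW_invol {w r c : ℕ} (hc : c < w) : rhoW w r (rhoW w r c) = c := by
  unfold rhoW; split <;> omega

lemma div_unique_aux {w r ρ r' ρ' : ℕ} (h : w * r + ρ = w * r' + ρ')
    (h1 : ρ < w) (h2 : ρ' < w) : r = r' ∧ ρ = ρ' := by
  rcases lt_trichotomy r r' with h3 | h3 | h3
  · exfalso; nlinarith
  · subst h3; exact ⟨rfl, by omega⟩
  · exfalso; nlinarith

/-- Let `𝒞 = (C₁,…,C_K)` be an interval partition of the columns `{0,…,L−1}`, given
by block starts `a j` and widths `w j` (blocks are `C_j = {a j, …, a j + w j − 1}`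
with `a 0 = 0`, `a (j+1) = a j + w j` and `a K = L`).  Any function `mC` satisfying
the boustrophedon formula `mC (r,c) = L·a_j + w_j·r + ρ^{(w_j)}_r(c − a_j)` for
`c ∈ C_j` is a bijection from the grid `{0,…,L−1}²` onto `{0,…,L²−1}`. -/
theorem stmt8 (L K : ℕ) (hL : 1 ≤ L) (hK : 1 ≤ K)
    (a w : ℕ → ℕ) (ha0 : a 0 = 0) (haK : a K = L)
    (hw : ∀ j < K, 1 ≤ w j) (hstep : ∀ j < K, a (j + 1) = a j + w j)
    (mC : ℕ × ℕ → ℕ)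
    (hmC : ∀ j < K, ∀ r c : ℕ, a j ≤ c → c < a (j + 1) →
      mC (r, c) = L * a j + w j * r + rhoW (w j) r (c - a j)) :
    Set.BijOn mC {p : ℕ × ℕ | p.1 < L ∧ p.2 < L} {k : ℕ | k < L ^ 2} := by
  -- monotonicity of a
  have hmono : ∀ j, j ≤ K → ∀ i, i ≤ j → a i ≤ a j := by
    intro j
    induction j with
    | zero =>
      intro _ i hi
      have : i = 0 := by omega
      simp [this]
    | succ n ih =>
      intro hn i hi
      rcases Nat.lt_or_ge i (n + 1) with h | h
      · have h1 := hstep n (by omega)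
        have h2 := hw n (by omega)
        have h3 := ih (by omega) i (by omega)
        omega
      · have : i = n + 1 := by omega
        simp [this]
  -- block existence
  have hblock : ∀ c < L, ∃ j < K, a j ≤ c ∧ c < a (j + 1) := by
    have key : ∀ n, n ≤ K → ∀ c, c < a n → ∃ j < n, a j ≤ c ∧ c < a (j + 1) := by
      intro n
      induction n with
      | zero => intro _ c hc; omega
      | succ m ih =>
        intro hn c hc
        by_cases h : c < a m
        · obtain ⟨j, hj, h1, h2⟩ := ih (by omega) c h
          exact ⟨j, by omega, h1, h2⟩
        · exact ⟨m, by omega, by omega, hc⟩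
    intro c hc
    exact key K le_rfl c (by omega)
  -- L-scaled block existence
  have hblockL : ∀ k < L ^ 2, ∃ j < K, L * a j ≤ k ∧ k < L * a (j + 1) := by
    have key : ∀ n, n ≤ K → ∀ k, k < L * a n →
        ∃ j < n, L * a j ≤ k ∧ k < L * a (j + 1) := by
      intro n
      induction n with
      | zero => intro _ k hk; simp [ha0] at hk
      | succ m ih =>
        intro hn k hk
        by_cases h : k < L * a m
        · obtain ⟨j, hj, h1, h2⟩ := ih (by omega) k h
          exact ⟨j, by omega, h1, h2⟩
        · exact ⟨m, by omega, by omega, hk⟩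
    intro k hk
    refine key K le_rfl k ?_
    rw [haK, ← pow_two]; exact hk
  -- value bounds on a block
  have hval : ∀ j < K, ∀ r < L, ∀ c, a j ≤ c → c < a (j + 1) →
      L * a j ≤ mC (r, c) ∧ mC (r, c) < L * a (j + 1) := by
    intro j hj r hr c h1 h2
    have hwj := hw j hj
    have hs := hstep j hj
    rw [hmC j hj r c h1 h2]
    have hρ : rhoW (w j) r (c - a j) < w j := rhoW_lt hwj (by omega)
    have h3 : w j * r + rhoW (w j) r (c - a j) < w j * L := by
      have h4 : w j * (r + 1) ≤ w j * L := Nat.mul_le_mul_left _ (by omega)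
      nlinarith
    constructor
    · exact (Nat.le_add_right _ _).trans (Nat.le_add_right _ _)
    · have h5 : L * a (j + 1) = L * a j + w j * L := by rw [hs]; ring
      linarith
  constructor
  · -- MapsTo
    rintro ⟨r, c⟩ ⟨hr, hc⟩
    obtain ⟨j, hj, h1, h2⟩ := hblock c hc
    have hb := (hval j hj r hr c h1 h2).2
    have hle : a (j + 1) ≤ L := by
      rw [← haK]; exact hmono K le_rfl (j + 1) (by omega)
    have : L * a (j + 1) ≤ L * L := Nat.mul_le_mul_left _ hle
    simp only [Set.mem_setOf_eq, pow_two]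
    linarith
  constructor
  · -- InjOn
    rintro ⟨r, c⟩ ⟨hr, hc⟩ ⟨r', c'⟩ ⟨hr', hc'⟩ heq
    simp only at hr hc hr' hc' heq
    obtain ⟨j, hj, h1, h2⟩ := hblock c hc
    obtain ⟨j', hj', h1', h2'⟩ := hblock c' hc'
    have hb := hval j hj r hr c h1 h2
    have hb' := hval j' hj' r' hr' c' h1' h2'
    -- j = j'
    have hjj : j = j' := by
      by_contra hne
      rcases lt_or_gt_of_ne hne with h | h
      · have : a (j + 1) ≤ a j' := hmono j' (by omega) (j + 1) (by omega)
        have : L * a (j + 1) ≤ L * a j' := Nat.mul_le_mul_left _ this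
        rw [heq] at hb
        linarith [hb.2, hb'.1]
      · have : a (j' + 1) ≤ a j := hmono j (by omega) (j' + 1) (by omega)
        have : L * a (j' + 1) ≤ L * a j := Nat.mul_le_mul_left _ this
        rw [heq] at hb
        linarith [hb.1, hb'.2]
    subst hjj
    have hwj := hw j hj
    have hs := hstep j hj
    rw [hmC j hj r c h1 h2, hmC j hj r' c' h1' h2'] at heq
    have hρ : rhoW (w j) r (c - a j) < w j := rhoW_lt hwj (by omega)
    have hρ' : rhoW (w j) r' (c' - a j) < w j := rhoW_lt hwj (by omega)
    have heq2 : w j * r + rhoW (w j) r (c - a j)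
        = w j * r' + rhoW (w j) r' (c' - a j) := by linarith
    obtain ⟨hrr, hcc⟩ := div_unique_aux heq2 hρ hρ'
    subst hrr
    have : c - a j = c' - a j := by
      have := congrArg (rhoW (w j) r) hcc
      rwa [rhoW_invol (by omega), rhoW_invol (by omega)] at this
    have : c = c' := by omega
    simp [this]
  · -- SurjOn
    rintro k hk
    simp only [Set.mem_setOf_eq] at hk
    obtain ⟨j, hj, h1, h2⟩ := hblockL k hk
    have hwj := hw j hj
    have hs := hstep j hj
    obtain ⟨k', rfl⟩ := Nat.exists_eq_add_of_le h1
    have hk' : k' < L * w j := by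
      have h5 : L * a (j + 1) = L * a j + L * w j := by rw [hs]; ring
      linarith
    set r := k' / w j with hr
    set ρ := k' % w j with hρdef
    have hρlt : ρ < w j := Nat.mod_lt _ (by omega)
    have hrL : r < L := by
      rw [hr]
      rw [Nat.div_lt_iff_lt_mul (by omega)]
      linarith
    set c := a j + rhoW (w j) r ρ with hc
    have hρ2 : rhoW (w j) r ρ < w j := rhoW_lt hwj hρlt
    have hc1 : a j ≤ c := by omega
    have hc2 : c < a (j + 1) := by omega
    refine ⟨(r, c), ⟨hrL, ?_⟩, ?_⟩
    · have : a (j + 1) ≤ L := by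
        rw [← haK]; exact hmono K le_rfl (j + 1) (by omega)
      simpa using lt_of_lt_of_le hc2 this
    · rw [hmC j hj r c hc1 hc2]
      have hsub : c - a j = rhoW (w j) r ρ := by omega
      rw [hsub, rhoW_invol hρlt]
      have := Nat.div_add_mod k' (w j)
      have heq3 : w j * r + ρ = k' := this
      linarith
end

section
/- Let L ≥ 1 and δ ≥ 1. Let 𝒞₀ be the interval partition of {0,…,L−1} whose blocks are the nonempty clamped intervals I_{2δn} (n ≥ 0), and 𝒞₁ the one whose blocks are the nonempty clamped intervals I_{2δn−δ} (n ≥ 0). Then for all points p, q ∈ {0,…,L−1}² with max(|p₁−q₁|, |p₂−q₂|) ≤ δ, there exist j ∈ {0,1}, a block C of 𝒞_j, and a row interval R = I_{2δm−δb} (for some m ∈ ℤ, b ∈ {0,1}) such that p, q ∈ R × C; consequently, p and q lie on a common subgrid through which the boustrophedon ordering m_{𝒞_j} follows a Hamiltonian path, since its image m_{𝒞_j}(R × C) is a set of consecutive integers and points with consecutive ranks in R × C are grid nearest neighbors. (Two complementary boustrophedon encodings suffice to make every pair of fermionic modes at ℓ∞-distance at most δ adjacent along an encoding within a constant-size subgrid.)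 -/
/-- The start `a` of the clamped interval `I_{2δn−δj}` (as a natural number). -/
def blockStart (δ j : ℕ) (n : ℤ) : ℕ :=
  (max 0 (2 * (δ : ℤ) * n - (δ : ℤ) * (j : ℤ))).toNat

/-- The width `w` of the clamped interval `I_{2δn−δj}` (when nonempty). -/
def blockWidth (L δ j : ℕ) (n : ℤ) : ℕ :=
  (min ((L : ℤ) - 1) (2 * (δ : ℤ) * n - (δ : ℤ) * (j : ℤ) + 2 * (δ : ℤ) - 1)).toNat
    - blockStart δ j n + 1

lemma cover (L δ : ℕ) (hδ : 1 ≤ δ) (x y : ℕ) (hx : x < L) (hy : y < L)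
    (h : |(x:ℤ) - y| ≤ δ) :
    ∃ j : ℕ, j ≤ 1 ∧ ∃ n : ℤ,
      (x:ℤ) ∈ clamped L δ (2*(δ:ℤ)*n - (δ:ℤ)*(j:ℤ)) ∧
      (y:ℤ) ∈ clamped L δ (2*(δ:ℤ)*n - (δ:ℤ)*(j:ℤ)) := by
  have habs : (x:ℤ) - y ≤ δ ∧ (y:ℤ) - x ≤ δ := abs_sub_le_iff.mp h
  set a : ℤ := min (x:ℤ) (y:ℤ) with ha
  have ha0 : 0 ≤ a := le_min (by positivity) (by positivity)
  set k : ℤ := a / δ with hk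
  have hδ0 : (0:ℤ) < δ := by exact_mod_cast hδ
  have hmod1 : 0 ≤ a % δ := Int.emod_nonneg a (by omega)
  have hmod2 : a % δ < δ := Int.emod_lt_of_pos a hδ0
  set K : ℤ := (δ:ℤ) * k with hK
  have hdm : K + a % δ = a := Int.mul_ediv_add_emod a δ
  have hax : a ≤ x := min_le_left _ _
  have hay : a ≤ y := min_le_right _ _
  have hxu : (x:ℤ) ≤ a + δ := by rcases min_cases (x:ℤ) (y:ℤ) with ⟨h1,_⟩|⟨h1,_⟩ <;> omega
  have hyu : (y:ℤ) ≤ a + δ := by rcases min_cases (x:ℤ) (y:ℤ) with ⟨h1,_⟩|⟨h1,_⟩ <;> omega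
  have main : ∀ j : ℕ, ∀ n : ℤ, 2*(δ:ℤ)*n - (δ:ℤ)*(j:ℤ) = K →
      (x:ℤ) ∈ clamped L δ (2*(δ:ℤ)*n - (δ:ℤ)*(j:ℤ)) ∧
      (y:ℤ) ∈ clamped L δ (2*(δ:ℤ)*n - (δ:ℤ)*(j:ℤ)) := by
    intro j n he
    rw [he]
    simp only [clamped, Set.mem_setOf_eq]
    omega
  rcases Int.even_or_odd k with ⟨n, hn⟩ | ⟨n, hn⟩
  · exact ⟨0, by norm_num, n, main 0 n (by rw [hK, hn]; push_cast; ring)⟩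
  · exact ⟨1, le_refl 1, n + 1, main 1 (n+1) (by rw [hK, hn]; push_cast; ring)⟩


lemma rhoW_le (w r c : ℕ) (hw : 1 ≤ w) (hc : c ≤ w - 1) : rhoW w r c ≤ w - 1 := by
  unfold rhoW; split <;> omega

lemma abs_nat_one (x y : ℕ) (h : y = x + 1 ∨ x = y + 1) : |(x:ℤ) - (y:ℤ)| = 1 := by
  rcases h with h | h <;> subst h <;> push_cast <;>
    [rw [show (x:ℤ) - ((x:ℤ)+1) = -1 by ring]; rw [show ((y:ℤ)+1) - (y:ℤ) = 1 by ring]] <;>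
    simp

lemma image_Icc (L w r0 r1 a : ℕ) (hw : 1 ≤ w) (hr : r0 ≤ r1)
    (f : ℕ × ℕ → ℕ)
    (hf : ∀ r c : ℕ, a ≤ c → c ≤ a + (w - 1) →
      f (r, c) = L * a + w * r + rhoW w r (c - a)) :
    f '' {p' : ℕ × ℕ | (r0 ≤ p'.1 ∧ p'.1 ≤ r1) ∧ (a ≤ p'.2 ∧ p'.2 ≤ a + (w - 1))} =
      Set.Icc (L * a + w * r0) (L * a + w * r1 + (w - 1)) := by
  ext k
  simp only [Set.mem_image, Set.mem_setOf_eq, Set.mem_Icc]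
  constructor
  · rintro ⟨⟨r, c⟩, ⟨⟨h1, h2⟩, h3, h4⟩, rfl⟩
    rw [hf r c h3 h4]
    have hρ : rhoW w r (c - a) ≤ w - 1 := rhoW_le w r (c - a) hw (by omega)
    have m1 : w * r0 ≤ w * r := Nat.mul_le_mul_left w h1
    have m2 : w * r ≤ w * r1 := Nat.mul_le_mul_left w h2
    omega
  · intro ⟨hk1, hk2⟩
    have hLa : L * a ≤ k := le_trans (Nat.le_add_right _ _) hk1
    set d : ℕ := k - L * a with hd
    set r : ℕ := d / w with hrdef
    set e : ℕ := d % w with hedef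
    have he : e < w := Nat.mod_lt _ hw
    have hdr : w * r + e = d := Nat.div_add_mod d w
    have hrlo : r0 ≤ r := by
      rw [hrdef, Nat.le_div_iff_mul_le hw, Nat.mul_comm]
      omega
    have hrhi : r ≤ r1 := by
      have hlt : d < (r1 + 1) * w := by
        have : (r1 + 1) * w = w * r1 + w := by ring
        omega
      have := (Nat.div_lt_iff_lt_mul hw).mpr hlt
      omega
    refine ⟨(r, if r % 2 = 0 then a + e else a + (w - 1 - e)), ⟨⟨hrlo, hrhi⟩, ?_, ?_⟩, ?_⟩
    · split <;> omega
    · split <;> omega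
    · by_cases hpar : r % 2 = 0 <;>
        · simp only [hpar, if_true, if_false, reduceIte]
          rw [hf r _ (by omega) (by omega)]
          unfold rhoW
          simp only [hpar, if_true, if_false, reduceIte]
          omega

lemma neighbor (L w a : ℕ) (hw : 1 ≤ w)
    (f : ℕ × ℕ → ℕ)
    (hf : ∀ r c : ℕ, a ≤ c → c ≤ a + (w - 1) →
      f (r, c) = L * a + w * r + rhoW w r (c - a))
    (r c r' c' : ℕ) (hc1 : a ≤ c) (hc2 : c ≤ a + (w - 1))
    (hc1' : a ≤ c') (hc2' : c' ≤ a + (w - 1))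
    (h : f (r', c') = f (r, c) + 1) :
    |(r:ℤ) - (r':ℤ)| + |(c:ℤ) - (c':ℤ)| = 1 := by
  rw [hf r c hc1 hc2, hf r' c' hc1' hc2'] at h
  have hρ : rhoW w r (c - a) ≤ w - 1 := rhoW_le w r _ hw (by omega)
  have hρ' : rhoW w r' (c' - a) ≤ w - 1 := rhoW_le w r' _ hw (by omega)
  have hwpos : 0 < w := hw
  have hsum : w * r' + rhoW w r' (c' - a) = w * r + (rhoW w r (c - a) + 1) := by
    linarith
  by_cases hcase : rhoW w r (c - a) + 1 < w
  · -- same row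
    have hdiv : r' = r := by
      have e1 : (w * r' + rhoW w r' (c' - a)) / w = r' := by
        rw [Nat.mul_add_div hwpos, Nat.div_eq_of_lt (by omega), Nat.add_zero]
      have e2 : (w * r + (rhoW w r (c - a) + 1)) / w = r := by
        rw [Nat.mul_add_div hwpos, Nat.div_eq_of_lt (by omega), Nat.add_zero]
      rw [← e1, hsum, e2]
    have hmod : rhoW w r' (c' - a) = rhoW w r (c - a) + 1 := by
      have e1 : (w * r' + rhoW w r' (c' - a)) % w = rhoW w r' (c' - a) := by
        rw [Nat.mul_add_mod, Nat.mod_eq_of_lt (by omega)]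
      have e2 : (w * r + (rhoW w r (c - a) + 1)) % w = rhoW w r (c - a) + 1 := by
        rw [Nat.mul_add_mod, Nat.mod_eq_of_lt (by omega)]
      rw [← e1, hsum, e2]
    subst hdiv
    have hcc : c' = c + 1 ∨ c = c' + 1 := by
      by_cases hpar : r' % 2 = 0 <;>
        simp only [rhoW, hpar, if_true, if_false, reduceIte] at hmod <;> omega
    rw [sub_self, abs_zero, zero_add]
    exact abs_nat_one c c' hcc
  · -- next row
    have hcw : rhoW w r (c - a) + 1 = w := by omega
    have hsum2 : w * r' + rhoW w r' (c' - a) = w * (r + 1) + 0 := by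
      rw [hsum, hcw]; ring
    have hdiv : r' = r + 1 := by
      have e1 : (w * r' + rhoW w r' (c' - a)) / w = r' := by
        rw [Nat.mul_add_div hwpos, Nat.div_eq_of_lt (by omega), Nat.add_zero]
      have e2 : (w * (r + 1) + 0) / w = r + 1 := by
        rw [Nat.mul_add_div hwpos, Nat.div_eq_of_lt hwpos, Nat.add_zero]
      rw [← e1, hsum2, e2]
    have hmod : rhoW w r' (c' - a) = 0 := by
      have e1 : (w * r' + rhoW w r' (c' - a)) % w = rhoW w r' (c' - a) := by
        rw [Nat.mul_add_mod, Nat.mod_eq_of_lt (by omega)]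
      have e2 : (w * (r + 1) + 0) % w = 0 := by
        rw [Nat.mul_add_mod, Nat.mod_eq_of_lt hwpos]
      rw [← e1, hsum2, e2]
    subst hdiv
    have hcc : c' = c := by
      by_cases hpar : r % 2 = 0
      · have hp2 : (r + 1) % 2 ≠ 0 := by omega
        simp only [rhoW, hpar, if_true, reduceIte] at hcw
        simp only [rhoW, hp2, if_false, reduceIte] at hmod
        omega
      · have hp2 : (r + 1) % 2 = 0 := by omega
        simp only [rhoW, hpar, if_false, reduceIte] at hcw
        simp only [rhoW, hp2, if_true, reduceIte] at hmod
        omega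
    rw [hcc, sub_self, abs_zero, add_zero]
    exact abs_nat_one r (r + 1) (Or.inl rfl)

/-- Two complementary boustrophedon encodings suffice for locality: `𝒞₀` is the
interval partition of the columns `{0,…,L−1}` into the nonempty clamped intervals
`I_{2δn}`, and `𝒞₁` the one into the nonempty intervals `I_{2δn−δ}`; `mC j` is the
boustrophedon ordering associated with `𝒞_j` (characterized blockwise by the
boustrophedon formula).  Then any two grid points `p, q` at `ℓ∞`-distance at most
`δ` lie in a common subgrid `R × C`, where `C = I_{2δn−δj}` is a block of `𝒞_j`
(for some `j ∈ {0,1}`) and `R = I_{2δm−δb}` is a row interval; moreover `m_{𝒞_j}`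
follows a Hamiltonian path through `R × C`: its image on `R × C` is a set of
consecutive integers, and points of `R × C` with consecutive ranks are grid
nearest neighbors. -/
theorem stmt10 (L δ : ℕ) (hL : 1 ≤ L) (hδ : 1 ≤ δ)
    (mC : ℕ → ℕ × ℕ → ℕ)
    (hmC : ∀ j : ℕ, j ≤ 1 → ∀ n : ℤ, ∀ r c : ℕ,
      ((c : ℤ) ∈ clamped L δ (2 * (δ : ℤ) * n - (δ : ℤ) * (j : ℤ))) →
      mC j (r, c) = L * blockStart δ j n + blockWidth L δ j n * r
        + rhoW (blockWidth L δ j n) r (c - blockStart δ j n))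
    (p q : ℕ × ℕ) (hp : p.1 < L ∧ p.2 < L) (hq : q.1 < L ∧ q.2 < L)
    (hdist : max |(p.1 : ℤ) - (q.1 : ℤ)| |(p.2 : ℤ) - (q.2 : ℤ)| ≤ (δ : ℤ)) :
    ∃ j : ℕ, j ≤ 1 ∧ ∃ b : ℕ, b ≤ 1 ∧ ∃ m n : ℤ, ∃ R C : Set ℤ,
      R = clamped L δ (2 * (δ : ℤ) * m - (δ : ℤ) * (b : ℤ)) ∧
      C = clamped L δ (2 * (δ : ℤ) * n - (δ : ℤ) * (j : ℤ)) ∧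
      ((p.1 : ℤ) ∈ R ∧ (q.1 : ℤ) ∈ R ∧ (p.2 : ℤ) ∈ C ∧ (q.2 : ℤ) ∈ C) ∧
      (∃ s t : ℕ, mC j '' {p' : ℕ × ℕ | (p'.1 : ℤ) ∈ R ∧ (p'.2 : ℤ) ∈ C} =
        Set.Icc s t) ∧
      (∀ p' q' : ℕ × ℕ,
        ((p'.1 : ℤ) ∈ R ∧ (p'.2 : ℤ) ∈ C) → ((q'.1 : ℤ) ∈ R ∧ (q'.2 : ℤ) ∈ C) →
        mC j q' = mC j p' + 1 →
        |(p'.1 : ℤ) - (q'.1 : ℤ)| + |(p'.2 : ℤ) - (q'.2 : ℤ)| = 1) := by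
  obtain ⟨j, hj, n, hpC, hqC⟩ := cover L δ hδ p.2 q.2 hp.2 hq.2
    (le_trans (le_max_right _ _) hdist)
  obtain ⟨b, hb, m, hpR, hqR⟩ := cover L δ hδ p.1 q.1 hp.1 hq.1
    (le_trans (le_max_left _ _) hdist)
  have hpC' := hpC; have hqC' := hqC; have hpR' := hpR; have hqR' := hqR
  simp only [clamped, Set.mem_setOf_eq] at hpC' hqC' hpR' hqR'
  set a : ℕ := blockStart δ j n with ha
  set w : ℕ := blockWidth L δ j n with hwdef
  set aR : ℕ := blockStart δ b m with haR
  set wR : ℕ := blockWidth L δ b m with hwR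
  have charC : ∀ c : ℕ, ((c:ℤ) ∈ clamped L δ (2*(δ:ℤ)*n - (δ:ℤ)*(j:ℤ))) ↔
      (a ≤ c ∧ c ≤ a + (w - 1)) := by
    intro c
    simp only [clamped, Set.mem_setOf_eq, ha, hwdef, blockStart, blockWidth]
    omega
  have charR : ∀ r : ℕ, ((r:ℤ) ∈ clamped L δ (2*(δ:ℤ)*m - (δ:ℤ)*(b:ℤ))) ↔
      (aR ≤ r ∧ r ≤ aR + (wR - 1)) := by
    intro r
    simp only [clamped, Set.mem_setOf_eq, haR, hwR, blockStart, blockWidth]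
    omega
  have hw : 1 ≤ w := by rw [hwdef]; simp only [blockWidth]; omega
  have hm : ∀ r c : ℕ, a ≤ c → c ≤ a + (w - 1) →
      mC j (r, c) = L * a + w * r + rhoW w r (c - a) := fun r c h1 h2 =>
    hmC j hj n r c ((charC c).mpr ⟨h1, h2⟩)
  refine ⟨j, hj, b, hb, m, n, _, _, rfl, rfl, ⟨hpR, hqR, hpC, hqC⟩, ?_, ?_⟩
  · have hset : {p' : ℕ × ℕ | (p'.1:ℤ) ∈ clamped L δ (2*(δ:ℤ)*m - (δ:ℤ)*(b:ℤ)) ∧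
        (p'.2:ℤ) ∈ clamped L δ (2*(δ:ℤ)*n - (δ:ℤ)*(j:ℤ))} =
        {p' : ℕ × ℕ | (aR ≤ p'.1 ∧ p'.1 ≤ aR + (wR - 1)) ∧
          (a ≤ p'.2 ∧ p'.2 ≤ a + (w - 1))} :=
      Set.ext fun p' => and_congr (charR p'.1) (charC p'.2)
    refine ⟨L * a + w * aR, L * a + w * (aR + (wR - 1)) + (w - 1), ?_⟩
    rw [hset]
    exact image_Icc L w aR (aR + (wR - 1)) a hw (Nat.le_add_right _ _) (mC j) hm
  · rintro ⟨r, c⟩ ⟨r', c'⟩ ⟨h1, h2⟩ ⟨h3, h4⟩ hstep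
    obtain ⟨hcl, hcu⟩ := (charC c).mp h2
    obtain ⟨hcl', hcu'⟩ := (charC c').mp h4
    exact neighbor L w a hw (mC j) hm r c r' c' hcl hcu hcl' hcu' hstep
end

section
/- Let L ≥ 1 and let 0 ≤ r, c ≤ L−1 and p be any integer. Then ρ^{(L²)}_p( L·r + ρ^{(L)}_r(c) ) = L·ρ^{(L)}_p(r) + ρ^{(L)}_{p+r}(c). In particular, the three-dimensional snake ordering defined recursively by m_S^{3D}(c,r,p) := ρ^{(L²)}_p( m_S^{2D}(r,c) ) + L²·p admits the closed form m_S^{3D}(c,r,p) = ρ^{(L)}_{p+r}(c) + L·ρ^{(L)}_p(r) + L²·p. -/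
/-- `ρ^{(w)}_r(c) = c` for even `r` and `w−1−c` for odd `r`, with integer subscript. -/
def rhoI (w : ℕ) (r : ℤ) (c : ℕ) : ℕ := if Even r then c else w - 1 - c

/-- The two-dimensional S-pattern ordering `m_S^{2D}(r,c) = L·r + ρ^{(L)}_r(c)`. -/
def mS2 (L r c : ℕ) : ℕ := L * r + rhoI L (r : ℤ) c

/-- The recursively defined three-dimensional snake ordering
`m_S^{3D}(c,r,p) = ρ^{(L²)}_p(m_S^{2D}(r,c)) + L²·p`. -/
def mS3rec (L c r p : ℕ) : ℕ := rhoI (L ^ 2) (p : ℤ) (mS2 L r c) + L ^ 2 * p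

/-- The closed form `m_S^{3D}(c,r,p) = ρ^{(L)}_{p+r}(c) + L·ρ^{(L)}_p(r) + L²·p`. -/
def mS3closed (L c r p : ℕ) : ℕ :=
  rhoI L ((p : ℤ) + (r : ℤ)) c + L * rhoI L (p : ℤ) r + L ^ 2 * p

theorem key (L : ℕ) (hL : 1 ≤ L) (r c : ℕ) (hr : r < L) (hc : c < L) (p : ℤ) :
    rhoI (L ^ 2) p (L * r + rhoI L (r : ℤ) c) =
      L * rhoI L p r + rhoI L (p + (r : ℤ)) c := by
  have hb : L * r + L * (L - 1 - r) = L * (L - 1) := by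
    rw [← Nat.mul_add]; congr 1; omega
  have hc2 : L * (L - 1) + L = L ^ 2 := by
    rw [pow_two, Nat.mul_sub, Nat.mul_one]
    have : L ≤ L * L := Nat.le_mul_of_pos_left L (by omega)
    omega
  have hpr : Even (p + (r : ℤ)) ↔ (Even p ↔ Even (r : ℤ)) := Int.even_add
  unfold rhoI
  rcases Int.even_or_odd p with hp | hp <;>
  rcases Int.even_or_odd (r : ℤ) with hre | hre
  · simp [hp, hre, hpr]
  · have : ¬ Even (r : ℤ) := Int.not_even_iff_odd.mpr hre
    simp [hp, this, hpr]
  · have hpo : ¬ Even p := Int.not_even_iff_odd.mpr hp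
    have hpro : ¬ Even (p + (r : ℤ)) := by
      rw [hpr]; intro h; exact hpo (h.mpr hre)
    simp only [if_pos hre, if_neg hpo, if_neg hpro]
    omega
  · have hpo : ¬ Even p := Int.not_even_iff_odd.mpr hp
    have hro : ¬ Even (r : ℤ) := Int.not_even_iff_odd.mpr hre
    have hpre : Even (p + (r : ℤ)) := hp.add_odd hre
    simp only [if_neg hro, if_neg hpo, if_pos hpre]
    omega

/-- The composition identity `ρ^{(L²)}_p(L·r + ρ^{(L)}_r(c)) = L·ρ^{(L)}_p(r) +
ρ^{(L)}_{p+r}(c)` for any integer subscript `p`; in particular, the recursively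
defined three-dimensional snake ordering admits the stated closed form. -/
theorem stmt11 (L : ℕ) (hL : 1 ≤ L) (r c : ℕ) (hr : r < L) (hc : c < L) :
    (∀ p : ℤ, rhoI (L ^ 2) p (L * r + rhoI L (r : ℤ) c) =
      L * rhoI L p r + rhoI L (p + (r : ℤ)) c) ∧
    (∀ p : ℕ, p < L → mS3rec L c r p = mS3closed L c r p) := by
  refine ⟨key L hL r c hr hc, fun p _ => ?_⟩
  unfold mS3rec mS3closed mS2
  rw [key L hL r c hr hc (p : ℤ)]
  ring
end

section
/- Let L ≥ 1, d ≥ 1 and let σ be a permutation of {1,…,d} (a dimensional hierarchy). The d-dimensional S-pattern ordering m_S^σ is a bijection from the grid {0,…,L−1}^d onto {0,…,L^d−1}. -/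
/-- `s_i(v) = ∑_{k > i} v_{σ(k)}` : the sum of the coordinates higher than `i` in
the dimensional hierarchy `σ`. -/
def sSum (d : ℕ) (σ : Equiv.Perm (Fin d)) (v : Fin d → ℕ) (i : Fin d) : ℕ :=
  ∑ k ∈ Finset.univ.filter (fun k => i < k), v (σ k)

/-- The `d`-dimensional S-pattern ordering
`m_S^σ(v) = ∑_i L^{i} · ρ_{s_i(v)}(v_{σ(i)})` (0-based `i`). -/
def mSd (L d : ℕ) (σ : Equiv.Perm (Fin d)) (v : Fin d → ℕ) : ℕ :=
  ∑ i : Fin d, L ^ (i : ℕ) * rho L (sSum d σ v i) (v (σ i))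

lemma rho_inj {L r c c' : ℕ} (hc : c < L) (hc' : c' < L)
    (h : rho L r c = rho L r c') : c = c' := by
  unfold rho at h; split at h <;> omega

lemma sum_split (L d : ℕ) (a : Fin (d+1) → ℕ) :
    ∑ j : Fin (d+1), L ^ (j:ℕ) * a j = a 0 + L * ∑ j : Fin d, L ^ (j:ℕ) * a j.succ := by
  rw [Fin.sum_univ_succ, Finset.mul_sum]
  simp [pow_succ', mul_assoc]

lemma sum_lt (L : ℕ) (hL : 1 ≤ L) : ∀ (d : ℕ) (a : Fin d → ℕ), (∀ j, a j < L) →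
    ∑ j : Fin d, L ^ (j:ℕ) * a j < L ^ d := by
  intro d
  induction d with
  | zero => intro a _; simp
  | succ d ih =>
    intro a ha
    rw [sum_split]
    have h1 : ∑ j : Fin d, L ^ (j:ℕ) * a j.succ < L ^ d := ih _ (fun j => ha _)
    have h0 := ha 0
    calc a 0 + L * ∑ j : Fin d, L ^ (j:ℕ) * a j.succ
        < L + L * ∑ j : Fin d, L ^ (j:ℕ) * a j.succ := by omega
      _ = L * (∑ j : Fin d, L ^ (j:ℕ) * a j.succ + 1) := by ring
      _ ≤ L * L ^ d := by exact Nat.mul_le_mul_left _ (by omega)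
      _ = L ^ (d+1) := by ring

lemma digit_eq (L : ℕ) (hL : 1 ≤ L) : ∀ (d : ℕ) (a : Fin d → ℕ), (∀ j, a j < L) →
    ∀ i : Fin d, (∑ j : Fin d, L ^ (j:ℕ) * a j) / L ^ (i:ℕ) % L = a i := by
  intro d
  induction d with
  | zero => intro a _ i; exact absurd i.2 (by omega)
  | succ d ih =>
    intro a ha i
    rw [sum_split]
    have key : (a 0 + L * ∑ j : Fin d, L ^ (j:ℕ) * a j.succ) / L
        = ∑ j : Fin d, L ^ (j:ℕ) * a j.succ := by
      rw [Nat.add_mul_div_left _ _ (by omega : 0 < L), Nat.div_eq_of_lt (ha 0)]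
      omega
    induction i using Fin.cases with
    | zero =>
      simp only [Fin.val_zero, pow_zero, Nat.div_one]
      rw [Nat.add_mul_mod_self_left, Nat.mod_eq_of_lt (ha 0)]
    | succ j =>
      have : (L : ℕ) ^ ((j.succ : Fin (d+1)) : ℕ) = L * L ^ (j:ℕ) := by
        simp [Fin.val_succ, pow_succ']
      rw [this, ← Nat.div_div_eq_div_mul, key]
      exact ih (fun j => a j.succ) (fun j => ha _) j

lemma sSum_congr {d : ℕ} (σ : Equiv.Perm (Fin d)) {v w : Fin d → ℕ} {i : Fin d}
    (h : ∀ k, i < k → v (σ k) = w (σ k)) : sSum d σ v i = sSum d σ w i := by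
  unfold sSum
  refine Finset.sum_congr rfl fun k hk => ?_
  exact h k (Finset.mem_filter.mp hk).2

/-- For any dimensional hierarchy `σ`, the `d`-dimensional S-pattern ordering is a
bijection from the grid `{0,…,L−1}^d` onto `{0,…,L^d−1}`. -/
theorem stmt12 (L d : ℕ) (hL : 1 ≤ L) (hd : 1 ≤ d) (σ : Equiv.Perm (Fin d)) :
    Set.BijOn (mSd L d σ) {v : Fin d → ℕ | ∀ i, v i < L} {k : ℕ | k < L ^ d} := by
  set s : Set (Fin d → ℕ) := {v | ∀ i, v i < L} with hs
  set t : Set ℕ := {k | k < L ^ d} with ht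
  have hdig : ∀ v ∈ s, ∀ i : Fin d, rho L (sSum d σ v i) (v (σ i)) < L := by
    intro v hv i; exact rho_lt hL (hv (σ i))
  -- maps to
  have hmaps : Set.MapsTo (mSd L d σ) s t := by
    intro v hv
    exact sum_lt L hL d _ (hdig v hv)
  -- injectivity
  have hinj : Set.InjOn (mSd L d σ) s := by
    intro v hv w hw h
    have hdigs : ∀ i : Fin d, rho L (sSum d σ v i) (v (σ i))
        = rho L (sSum d σ w i) (w (σ i)) := by
      intro i
      have h1 := digit_eq L hL d _ (hdig v hv) i
      have h2 := digit_eq L hL d _ (hdig w hw) i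
      rw [← h1, ← h2]
      unfold mSd at h
      rw [h]
    have key : ∀ n : ℕ, ∀ i : Fin d, d - (i : ℕ) ≤ n → v (σ i) = w (σ i) := by
      intro n
      induction n with
      | zero => intro i hi; exact absurd i.2 (by omega)
      | succ n ih =>
        intro i hi
        have hss : sSum d σ v i = sSum d σ w i :=
          sSum_congr σ (fun k hk => ih k (by have := Fin.lt_iff_val_lt_val.mp hk; omega))
        have := hdigs i
        rw [hss] at this
        exact rho_inj (hv (σ i)) (hw (σ i)) this
    funext x
    have : v (σ (σ.symm x)) = w (σ (σ.symm x)) := key d _ (by omega)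
    simpa using this
  -- cardinalities
  have e : (Fin d → Fin L) → (Fin d → ℕ) := fun g i => (g i : ℕ)
  have he_inj : Function.Injective (fun (g : Fin d → Fin L) (i : Fin d) => (g i : ℕ)) := by
    intro g g' h
    funext i
    exact Fin.ext (congrFun h i)
  have hrange : s = Set.range (fun (g : Fin d → Fin L) (i : Fin d) => (g i : ℕ)) := by
    ext v
    constructor
    · intro hv
      exact ⟨fun i => ⟨v i, hv i⟩, rfl⟩
    · rintro ⟨g, rfl⟩ i
      exact (g i).2
  have hscard : s.ncard = L ^ d := by
    rw [hrange, ← Nat.card_coe_set_eq, Nat.card_range_of_injective he_inj]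
    simp [Nat.card_eq_fintype_card]
  have htfin : t.Finite := Set.finite_Iio (L ^ d)
  have htcard : t.ncard = L ^ d := by
    have : t = ↑(Finset.range (L ^ d)) := by ext k; simp [ht]
    rw [this, Set.ncard_coe_finset, Finset.card_range]
  have himg : mSd L d σ '' s = t := by
    refine Set.eq_of_subset_of_ncard_le (Set.mapsTo_iff_image_subset.mp hmaps) ?_ htfin
    rw [Set.ncard_image_of_injOn hinj, hscard, htcard]
  have := hinj.bijOn_image (f := mSd L d σ)
  rwa [himg] at this
end

section
/- Let m, n ≥ 1. Every permutation P of the grid Fin m × Fin n factors as P = P_X' ∘ P_Y ∘ P_X, where P_X and P_X' are row permutations (they fix the first coordinate of every point, permuting points only within each row) and P_Y is a column permutation (it fixes the second coordinate of every point, permuting points only within each column). -/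
open Finset

/-- Edge-coloring lemma: given `f : Fin m × Fin n → Fin m` whose fibers all have
cardinality at most `n`, there is a "coloring" `c` injective on each row and on
each fiber of `f`. Proved by induction on `n` via Hall's marriage theorem. -/
lemma coloring_lemma (n : ℕ) : ∀ {m : ℕ} (f : Fin m × Fin n → Fin m),
    (∀ i', (Finset.univ.filter fun p => f p = i').card ≤ n) →
    ∃ c : Fin m × Fin n → Fin n,
      (∀ i : Fin m, Function.Injective fun j => c (i, j)) ∧
      (∀ p q, f p = f q → c p = c q → p = q) := by
  induction n with
  | zero =>
    intro m f _
    exact ⟨fun p => p.2, fun i j => j.elim0, fun p q _ _ => p.2.elim0⟩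
  | succ n ih =>
    intro m f hf
    classical
    set A : Fin m → Finset (Fin m) := fun i => Finset.univ.image fun j => f (i, j) with hA
    have hall : ∀ S : Finset (Fin m), S.card ≤ (S.biUnion A).card := by
      intro S
      have h1 : (S ×ˢ (Finset.univ : Finset (Fin (n + 1)))).card ≤
          (n + 1) * ((S ×ˢ (Finset.univ : Finset (Fin (n + 1)))).image f).card := by
        apply Finset.card_le_mul_card_image
        intro b _
        calc ((S ×ˢ Finset.univ).filter fun p => f p = b).card
            ≤ (Finset.univ.filter fun p => f p = b).card := by
              apply Finset.card_le_card
              intro p hp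
              simp only [Finset.mem_filter, Finset.mem_univ, true_and] at hp ⊢
              exact hp.2
          _ ≤ n + 1 := hf b
      have h2 : ((S ×ˢ (Finset.univ : Finset (Fin (n + 1)))).image f) ⊆ S.biUnion A := by
        intro b hb
        simp only [Finset.mem_image, Finset.mem_product] at hb
        obtain ⟨p, ⟨hp1, _⟩, rfl⟩ := hb
        exact Finset.mem_biUnion.2 ⟨p.1, hp1,
          Finset.mem_image.2 ⟨p.2, Finset.mem_univ _, rfl⟩⟩
      have h3 := Finset.card_le_card h2
      have hcard : (S ×ˢ (Finset.univ : Finset (Fin (n + 1)))).card = S.card * (n + 1) := by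
        simp [Finset.card_product]
      have : S.card * (n + 1) ≤ (S.biUnion A).card * (n + 1) := by
        calc S.card * (n + 1) = (S ×ˢ (Finset.univ : Finset (Fin (n + 1)))).card := hcard.symm
          _ ≤ (n + 1) * ((S ×ˢ (Finset.univ : Finset (Fin (n + 1)))).image f).card := h1
          _ ≤ (n + 1) * (S.biUnion A).card := by exact Nat.mul_le_mul_left _ h3
          _ = (S.biUnion A).card * (n + 1) := Nat.mul_comm _ _
      exact Nat.le_of_mul_le_mul_right this (Nat.succ_pos n)
    obtain ⟨g, hg_inj, hg_mem⟩ := (Finset.all_card_le_biUnion_card_iff_exists_injective A).1 hall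
    have hg_bij : Function.Bijective g := Finite.injective_iff_bijective.1 hg_inj
    have hj : ∀ i, ∃ l, f (i, l) = g i := by
      intro i
      obtain ⟨l, _, hl⟩ := Finset.mem_image.1 (hg_mem i)
      exact ⟨l, hl⟩
    choose j hj2 using hj
    set f' : Fin m × Fin n → Fin m := fun p => f (p.1, (j p.1).succAbove p.2) with hf'def
    have hf' : ∀ i', (Finset.univ.filter fun p => f' p = i').card ≤ n := by
      intro i'
      obtain ⟨i0, rfl⟩ := hg_bij.2 i'
      have hsub : (Finset.univ.filter fun p : Fin m × Fin n => f' p = g i0).card ≤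
          ((Finset.univ.filter fun p : Fin m × Fin (n + 1) => f p = g i0).erase (i0, j i0)).card := by
        apply Finset.card_le_card_of_injOn (fun p => (p.1, (j p.1).succAbove p.2))
        · intro p hp
          simp only [Finset.mem_coe, Finset.mem_filter, Finset.mem_univ, true_and] at hp
          refine Finset.mem_erase.2 ⟨?_, by
            simp only [Finset.mem_filter, Finset.mem_univ, true_and]; exact hp⟩
          intro h
          have h1 : p.1 = i0 := congrArg Prod.fst h
          have h2 : (j p.1).succAbove p.2 = j i0 := congrArg Prod.snd h
          rw [h1] at h2
          exact Fin.succAbove_ne _ _ h2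
        · intro p _ q _ hpq
          simp only at hpq
          have h1 : p.1 = q.1 := (Prod.ext_iff.1 hpq).1
          have h2 : (j p.1).succAbove p.2 = (j q.1).succAbove q.2 := (Prod.ext_iff.1 hpq).2
          rw [h1] at h2
          exact Prod.ext h1 (Fin.succAbove_right_injective h2)
      have hmem : (i0, j i0) ∈ Finset.univ.filter fun p : Fin m × Fin (n + 1) => f p = g i0 := by
        simp only [Finset.mem_filter, Finset.mem_univ, true_and]
        exact hj2 i0
      calc (Finset.univ.filter fun p : Fin m × Fin n => f' p = g i0).card
          ≤ _ := hsub
        _ = (Finset.univ.filter fun p : Fin m × Fin (n + 1) => f p = g i0).card - 1 :=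
            Finset.card_erase_of_mem hmem
        _ ≤ (n + 1) - 1 := Nat.sub_le_sub_right (hf _) 1
        _ = n := rfl
    obtain ⟨c', hc'row, hc'fib⟩ := ih f' hf'
    have key : ∀ (i : Fin m) (l : Fin (n + 1)), l ≠ j i → ∃ k, (j i).succAbove k = l :=
      fun _ l h => Fin.exists_succAbove_eq h
    set c : Fin m × Fin (n + 1) → Fin (n + 1) := fun p =>
      if h : p.2 = j p.1 then Fin.last n
      else (c' (p.1, Classical.choose (key p.1 p.2 h))).castSucc with hc
    have hspec : ∀ (i : Fin m) (l : Fin (n + 1)) (h : l ≠ j i),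
        (j i).succAbove (Classical.choose (key i l h)) = l :=
      fun i l h => Classical.choose_spec (key i l h)
    refine ⟨c, ?_, ?_⟩
    · intro i l1 l2 hl
      simp only [hc] at hl
      split_ifs at hl with h1 h2 h2
      · rw [h1, h2]
      · exact absurd hl ((Fin.castSucc_lt_last _).ne')
      · exact absurd hl ((Fin.castSucc_lt_last _).ne)
      · have hk := hc'row i (Fin.castSucc_inj.1 hl)
        rw [← hspec i l1 h1, ← hspec i l2 h2, hk]
    · rintro ⟨i1, l1⟩ ⟨i2, l2⟩ hfpq hcpq
      simp only [hc] at hcpq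
      split_ifs at hcpq with h1 h2 h2
      · have hgg : g i1 = g i2 := by
          rw [← hj2 i1, ← hj2 i2, ← h1, ← h2]; exact hfpq
        have hi : i1 = i2 := hg_inj hgg
        subst hi
        exact Prod.ext rfl (h1.trans h2.symm)
      · exact absurd hcpq ((Fin.castSucc_lt_last _).ne')
      · exact absurd hcpq ((Fin.castSucc_lt_last _).ne)
      · have hcc := Fin.castSucc_inj.1 hcpq
        have hff : f' (i1, Classical.choose (key i1 l1 h1)) =
            f' (i2, Classical.choose (key i2 l2 h2)) := by
          simp only [hf'def]
          rw [hspec i1 l1 h1, hspec i2 l2 h2]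
          exact hfpq
        have heq := hc'fib _ _ hff hcc
        have hi : i1 = i2 := congrArg Prod.fst heq
        have hk := congrArg Prod.snd heq
        simp only at hk
        refine Prod.ext hi ?_
        simp only
        rw [← hspec i1 l1 h1, ← hspec i2 l2 h2]
        subst hi
        rw [hk]

/-- Row–column–row decomposition of lattice permutations: every permutation `P` of
the grid `Fin m × Fin n` factors as `P = P_X' ∘ P_Y ∘ P_X`, where `P_X`, `P_X'`
are row permutations (fixing the first coordinate of every point) and `P_Y` is a
column permutation (fixing the second coordinate of every point). -/
theorem stmt14 (m n : ℕ) (hm : 1 ≤ m) (hn : 1 ≤ n)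
    (P : Equiv.Perm (Fin m × Fin n)) :
    ∃ PX PX' PY : Equiv.Perm (Fin m × Fin n),
      (∀ p, (PX p).1 = p.1) ∧ (∀ p, (PX' p).1 = p.1) ∧
      (∀ p, (PY p).2 = p.2) ∧
      (∀ p, P p = PX' (PY (PX p))) := by
  classical
  set f : Fin m × Fin n → Fin m := fun p => (P p).1 with hfdef
  have hf : ∀ i', (Finset.univ.filter fun p => f p = i').card ≤ n := by
    intro i'
    have h : (Finset.univ.filter fun p => f p = i').card ≤
        (({i'} : Finset (Fin m)) ×ˢ (Finset.univ : Finset (Fin n))).card := by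
      apply Finset.card_le_card_of_injOn (fun p => P p)
      · intro p hp
        simp only [Finset.mem_coe, Finset.mem_filter, Finset.mem_univ, true_and, hfdef] at hp
        simp only [Finset.mem_coe, Finset.mem_product, Finset.mem_singleton, Finset.mem_univ, and_true]
        exact hp
      · intro p _ q _ h
        exact P.injective h
    simpa using h
  obtain ⟨c, hrow, hfib⟩ := coloring_lemma n f hf
  have hψinj : Function.Injective (fun p : Fin m × Fin n => (p.1, c p)) := by
    rintro ⟨i1, j1⟩ ⟨i2, j2⟩ h
    have h1 : i1 = i2 := congrArg Prod.fst h
    subst h1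
    have h2 : c (i1, j1) = c (i1, j2) := congrArg Prod.snd h
    exact Prod.ext rfl (hrow i1 h2)
  let ψ : Equiv.Perm (Fin m × Fin n) :=
    Equiv.ofBijective _ (Finite.injective_iff_bijective.1 hψinj)
  have hψ : ∀ p, ψ p = (p.1, c p) := fun p => rfl
  have hθinj : Function.Injective (fun q : Fin m × Fin n => ((P (ψ.symm q)).1, q.2)) := by
    intro q1 q2 h
    simp only at h
    have h2 : q1.2 = q2.2 := (Prod.ext_iff.1 h).2
    have h1 : f (ψ.symm q1) = f (ψ.symm q2) := (Prod.ext_iff.1 h).1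
    have e1 : c (ψ.symm q1) = q1.2 := congrArg Prod.snd (ψ.apply_symm_apply q1)
    have e2 : c (ψ.symm q2) = q2.2 := congrArg Prod.snd (ψ.apply_symm_apply q2)
    have hc : c (ψ.symm q1) = c (ψ.symm q2) := by rw [e1, e2, h2]
    have := hfib _ _ h1 hc
    have := congrArg ψ this
    rwa [ψ.apply_symm_apply, ψ.apply_symm_apply] at this
  let θ : Equiv.Perm (Fin m × Fin n) :=
    Equiv.ofBijective _ (Finite.injective_iff_bijective.1 hθinj)
  have hθ : ∀ q, θ q = ((P (ψ.symm q)).1, q.2) := fun q => rfl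
  refine ⟨ψ, (θ.symm.trans ψ.symm).trans P, θ, ?_, ?_, ?_, ?_⟩
  · intro p; rfl
  · intro q
    show (P (ψ.symm (θ.symm q))).1 = q.1
    have h := θ.apply_symm_apply q
    rw [hθ] at h
    exact (Prod.ext_iff.1 h).1
  · intro q; rfl
  · intro p
    show P p = P (ψ.symm (θ.symm (θ (ψ p))))
    rw [θ.symm_apply_apply, ψ.symm_apply_apply]
end

section
/- Let a ≥ 1 be a natural number and let C ≥ 0 and x ≥ 1 be real numbers. Then there exists a real number y with 1 ≤ y ≤ x such that (x/y) · ( x + C·y^{(a+1)/a} ) ≤ (1 + C) · x^{(a+2)/(a+1)}; indeed y = x^{a/(a+1)} achieves equality. (This is the inductive optimization step showing that fermion routing on fully connected qubit systems, implemented by recursively treating the system as a d-dimensional lattice, achieves depth O(log^{(a+1)/a} N) for every a, approaching O(log N).) -/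
/-- Inductive optimization step for fermion routing on fully connected qubit
systems: for `a ≥ 1`, `C ≥ 0` and `x ≥ 1`, some `y` with `1 ≤ y ≤ x` satisfies
`(x/y)·(x + C·y^{(a+1)/a}) ≤ (1+C)·x^{(a+2)/(a+1)}`; indeed `y = x^{a/(a+1)}`
achieves equality. -/
theorem stmt15 (a : ℕ) (ha : 1 ≤ a) (C x : ℝ) (hC : 0 ≤ C) (hx : 1 ≤ x) :
    ∃ y : ℝ, 1 ≤ y ∧ y ≤ x ∧
      (x / y) * (x + C * y ^ (((a : ℝ) + 1) / (a : ℝ)))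
        ≤ (1 + C) * x ^ (((a : ℝ) + 2) / ((a : ℝ) + 1)) ∧
      y = x ^ ((a : ℝ) / ((a : ℝ) + 1)) ∧
      (x / y) * (x + C * y ^ (((a : ℝ) + 1) / (a : ℝ)))
        = (1 + C) * x ^ (((a : ℝ) + 2) / ((a : ℝ) + 1)) := by
  have hx0 : (0 : ℝ) < x := lt_of_lt_of_le one_pos hx
  have ha0 : (0 : ℝ) < (a : ℝ) := by exact_mod_cast ha
  have ha1 : (0 : ℝ) < (a : ℝ) + 1 := by positivity
  set p : ℝ := (a : ℝ) / ((a : ℝ) + 1) with hp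
  refine ⟨x ^ p, ?_, ?_, ?_, rfl, ?_⟩
  · exact Real.one_le_rpow hx (by positivity)
  · calc x ^ p ≤ x ^ (1 : ℝ) :=
        Real.rpow_le_rpow_of_exponent_le hx (by rw [hp, div_le_one ha1]; linarith)
      _ = x := Real.rpow_one x
  all_goals {
    have key : (x ^ p) ^ (((a : ℝ) + 1) / (a : ℝ)) = x := by
      rw [← Real.rpow_mul hx0.le, hp]
      rw [show (a : ℝ) / ((a : ℝ) + 1) * (((a : ℝ) + 1) / (a : ℝ)) = 1 by
        field_simp, Real.rpow_one]
    have hdiv : x / x ^ p = x ^ (1 - p) := by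
      rw [Real.rpow_sub hx0, Real.rpow_one]
    have heq : (x / x ^ p) * (x + C * (x ^ p) ^ (((a : ℝ) + 1) / (a : ℝ)))
        = (1 + C) * x ^ (((a : ℝ) + 2) / ((a : ℝ) + 1)) := by
      rw [key, hdiv]
      have : (1 : ℝ) - p + 1 = ((a : ℝ) + 2) / ((a : ℝ) + 1) := by
        rw [hp]; field_simp; ring
      rw [← this, Real.rpow_add hx0, Real.rpow_one]
      ring
    first | exact le_of_eq heq | exact heq }
end

section
/- Let n ≥ 1. For every permutation π of Fin n there exist permutations τ₁, τ₂, …, τ_n of Fin n such that π = τ_n ∘ ⋯ ∘ τ₂ ∘ τ₁, and each τ_k is a product of disjoint adjacent transpositions of alternating parity: τ_k moves an element i only to i−1 or i+1, the swapped pairs within each round are pairwise disjoint, and in round k only pairs (i, i+1) with i ≡ k (mod 2) are swapped. (Correctness of odd–even transposition sorting: any permutation on a line of n sites can be routed in at most n rounds of parallel nearest-neighbor swaps, which bounds the worst-case depth of one-dimensional fermionic swap networks used as the row and column subroutines of the fermion routing algorithm.) -/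
namespace OddEvenNet

section Core

variable (n : ℕ) (b : ℕ → ℕ → Bool)

/-- Number of ones at positions in `[y, n)` at time `t`. -/
def S (t y : ℕ) : ℕ := ∑ k ∈ Finset.Ico y n, (b t k).toNat

variable {n b}

lemma S_of_ge {t y : ℕ} (h : n ≤ y) : S n b t y = 0 := by
  unfold S
  rw [Finset.Ico_eq_empty (by omega), Finset.sum_empty]

lemma S_succ {t y : ℕ} (h : y < n) :
    S n b t y = (b t y).toNat + S n b t (y + 1) := by
  unfold S
  rw [Finset.sum_eq_sum_Ico_succ_bot h]

lemma S_le (t y : ℕ) : S n b t y ≤ n - y := by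
  calc S n b t y ≤ ∑ _k ∈ Finset.Ico y n, 1 :=
        Finset.sum_le_sum (fun k _ => by cases b t k <;> simp)
    _ = n - y := by rw [Finset.sum_const, smul_eq_mul, mul_one, Nat.card_Ico]

lemma S_anti {t : ℕ} {y z : ℕ} (h : y ≤ z) : S n b t z ≤ S n b t y :=
  Finset.sum_le_sum_of_subset (Finset.Ico_subset_Ico h le_rfl)

/-- condition under which the suffix count at `y` grows by one in round `t+1`. -/
def grow (n : ℕ) (b : ℕ → ℕ → Bool) (t y : ℕ) : Prop :=
  1 ≤ y ∧ y < n ∧ y % 2 ≠ (t + 1) % 2 ∧ b t (y - 1) = true ∧ b t y = false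

instance (n : ℕ) (b : ℕ → ℕ → Bool) (t y : ℕ) : Decidable (grow n b t y) := by
  unfold grow; infer_instance

section Step

variable (hpair : ∀ t i, i % 2 = (t + 1) % 2 → i + 1 < n →
  b (t + 1) i = (b t i && b t (i + 1)) ∧
  b (t + 1) (i + 1) = (b t i || b t (i + 1)))
variable (hfix : ∀ t i, ¬(i % 2 = (t + 1) % 2 ∧ i + 1 < n) →
  (∀ q, i = q + 1 → ¬(q % 2 = (t + 1) % 2 ∧ q + 1 < n)) →
  b (t + 1) i = b t i)

include hpair hfix in
lemma S_step (t : ℕ) : ∀ d y, n ≤ y + d →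
    S n b (t + 1) y = S n b t y + (if grow n b t y then 1 else 0) := by
  intro d
  induction d with
  | zero =>
      intro y hy
      rw [S_of_ge (by omega), S_of_ge (by omega),
        if_neg (fun h => by have := h.2.1; omega)]
  | succ d ih =>
      intro y hy
      by_cases hyn : n ≤ y
      · rw [S_of_ge hyn, S_of_ge hyn,
          if_neg (fun h => by have := h.2.1; omega)]
      push_neg at hyn
      have h2 := ih (y + 1) (by omega)
      have hys : y + 1 - 1 = y := by omega
      by_cases hA : y % 2 = (t + 1) % 2 ∧ y + 1 < n
      · obtain ⟨hA1, hA2⟩ := hA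
        have h1 := (hpair t y hA1 hA2).1
        have hgy : ¬ grow n b t y := by
          rintro ⟨-, -, hc, -, -⟩; omega
        cases hb1 : b t y <;> cases hb2 : b t (y + 1)
        · rw [if_neg (by rintro ⟨-, -, -, hc, -⟩; rw [hys, hb1] at hc; simp at hc)] at h2
          rw [S_succ hyn, S_succ (t := t) hyn, h1, h2, hb1, hb2, if_neg hgy]
          simp <;> omega
        · rw [if_neg (by rintro ⟨-, -, -, hc, -⟩; rw [hys, hb1] at hc; simp at hc)] at h2
          rw [S_succ hyn, S_succ (t := t) hyn, h1, h2, hb1, hb2, if_neg hgy]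
          simp <;> omega
        · rw [if_pos ⟨by omega, hA2, by omega, by rw [hys]; exact hb1, hb2⟩] at h2
          rw [S_succ hyn, S_succ (t := t) hyn, h1, h2, hb1, hb2, if_neg hgy]
          simp <;> omega
        · rw [if_neg (by rintro ⟨-, -, -, -, hc⟩; rw [hb2] at hc; simp at hc)] at h2
          rw [S_succ hyn, S_succ (t := t) hyn, h1, h2, hb1, hb2, if_neg hgy]
          simp <;> omega
      · by_cases hB : 1 ≤ y ∧ (y - 1) % 2 = (t + 1) % 2
        · obtain ⟨hB1, hB2⟩ := hB
          have hyy : y - 1 + 1 = y := by omega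
          have h1 := (hpair t (y - 1) hB2 (by omega)).2
          rw [hyy] at h1
          rw [if_neg (by rintro ⟨-, -, hc, -, -⟩; omega)] at h2
          cases hb1 : b t (y - 1) <;> cases hb2 : b t y
          · rw [S_succ hyn, S_succ (t := t) hyn, h1, h2, hb1, hb2,
              if_neg (by rintro ⟨-, -, -, hc, -⟩; rw [hb1] at hc; simp at hc)]
            simp <;> omega
          · rw [S_succ hyn, S_succ (t := t) hyn, h1, h2, hb1, hb2,
              if_neg (by rintro ⟨-, -, -, hc, -⟩; rw [hb1] at hc; simp at hc)]
            simp <;> omega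
          · rw [S_succ hyn, S_succ (t := t) hyn, h1, h2, hb1, hb2,
              if_pos ⟨hB1, hyn, by omega, hb1, hb2⟩]
            simp <;> omega
          · rw [S_succ hyn, S_succ (t := t) hyn, h1, h2, hb1, hb2,
              if_neg (by rintro ⟨-, -, -, -, hc⟩; rw [hb2] at hc; simp at hc)]
            simp <;> omega
        · have h1 := hfix t y hA (fun q hq hc => hB ⟨by omega, by omega⟩)
          rw [if_neg (by
            rintro ⟨-, hc2, hc3, -, -⟩
            exact hA ⟨by omega, by omega⟩)] at h2
          rw [S_succ hyn, S_succ (t := t) hyn, h1, h2,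
            if_neg (by rintro ⟨hc1, -, hc3, -, -⟩; exact hB ⟨hc1, by omega⟩)]
          simp <;> omega

include hpair hfix in
lemma S_mono_t (t y : ℕ) : S n b t y ≤ S n b (t + 1) y := by
  rw [S_step hpair hfix t (n + 1) y (by omega)]
  omega

/-- Invariant A: at time `t`, a one at position `i` whose rank from the right
(`S n b t i`) is at most `t`, and which is not part of a packed suffix of ones,
sits at a position of parity opposite to `t`. -/
def InvA (n : ℕ) (b : ℕ → ℕ → Bool) (t : ℕ) : Prop :=
  ∀ i, b t i = true → S n b t i ≤ t → S n b t i < n - i → i % 2 ≠ t % 2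

/-- Invariant B: at time `t`, the `j`-th one from the right has position at
least `min (n - j) (t - j)`. -/
def InvB (n : ℕ) (b : ℕ → ℕ → Bool) (t : ℕ) : Prop :=
  ∀ j y, 1 ≤ j → j ≤ S n b t 0 → y + j ≤ n → y + j ≤ t → j ≤ S n b t y

lemma invA_zero : InvA n b 0 := by
  intro i hb hle hcap
  have hi : i < n := by by_contra hni; omega
  have h := S_succ (b := b) (t := 0) hi
  rw [hb] at h
  simp at h
  omega

lemma invB_zero : InvB n b 0 := by
  intro j y hj _ _ hyt
  omega

include hpair hfix in
lemma invA_step (t : ℕ) (ha : InvA n b t) : InvA n b (t + 1) := by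
  intro i hb hrank hcap hpar
  have hin : i < n := by by_contra hni; omega
  have hi1 : i + 1 < n := by
    by_contra hni
    have h := S_succ (b := b) (t := t + 1) hin
    rw [hb] at h
    simp at h
    omega
  obtain ⟨hp1, -⟩ := hpair t i hpar hi1
  rw [hb] at hp1
  have hand : b t i = true ∧ b t (i + 1) = true := by
    refine ⟨?_, ?_⟩
    · by_contra h
      rw [Bool.eq_false_iff.mpr h] at hp1
      simp at hp1
    · by_contra h
      rw [Bool.eq_false_iff.mpr h] at hp1
      simp at hp1
  have hstep := S_step hpair hfix t (n + 1) (i + 1) (by omega)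
  rw [if_neg (by
    rintro ⟨-, -, -, -, hc⟩
    rw [hand.2] at hc; simp at hc)] at hstep
  have hSrel : S n b (t + 1) i = 1 + S n b t (i + 1) := by
    rw [S_succ hin, hb, hstep]; simp
  have hA1 := ha (i + 1) hand.2 (by omega) (by omega)
  omega

include hpair hfix in
lemma invB_step (t : ℕ) (ha : InvA n b t) (hbt : InvB n b t) : InvB n b (t + 1) := by
  intro j y hj hjS hyn hyt
  have hS0 : S n b (t + 1) 0 = S n b t 0 := by
    rw [S_step hpair hfix t (n + 1) 0 (by omega), if_neg (by rintro ⟨hc, -⟩; omega)]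
    omega
  by_cases hle : y + j ≤ t
  · exact le_trans (hbt j y hj (by omega) hyn hle) (S_mono_t hpair hfix t y)
  have hyt1 : y + j = t + 1 := by omega
  rcases y with - | q
  · omega
  have hq := hbt j q hj (by omega) (by omega) (by omega)
  by_cases hq1 : j ≤ S n b t (q + 1)
  · exact le_trans hq1 (S_mono_t hpair hfix t (q + 1))
  push_neg at hq1
  have hqn : q + 1 < n := by omega
  have hSq := S_succ (n := n) (b := b) (t := t) (y := q) (by omega)
  have hbq : b t q = true := by
    cases h1 : b t q
    · rw [h1] at hSq; simp at hSq; omega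
    · rfl
  rw [hbq] at hSq
  simp at hSq
  have hparq : q % 2 ≠ t % 2 := ha q hbq (by omega) (by omega)
  have hbq1 : b t (q + 1) = false := by
    cases h2 : b t (q + 1)
    · rfl
    · have := ha (q + 1) h2 (by omega) (by omega)
      omega
  have hgrow : grow n b t (q + 1) := by
    refine ⟨by omega, hqn, by omega, by simpa using hbq, hbq1⟩
  have hstep := S_step hpair hfix t (n + 1) (q + 1) (by omega)
  rw [if_pos hgrow] at hstep
  omega

include hpair hfix in
lemma invAB : ∀ t, InvA n b t ∧ InvB n b t := by
  intro t
  induction t with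
  | zero => exact ⟨invA_zero, invB_zero⟩
  | succ t ih =>
      exact ⟨invA_step hpair hfix t ih.1,
        invB_step hpair hfix t ih.1 ih.2⟩

include hpair hfix in
/-- After `n` rounds, the 0-1 array is sorted. -/
lemma core_sorted (i : ℕ) (hi : i + 1 < n) (h1 : b n i = true) :
    b n (i + 1) = true := by
  by_contra hfalse
  have hbf : b n (i + 1) = false := by
    cases h : b n (i + 1)
    · rfl
    · exact absurd h hfalse
  have hSi := S_succ (n := n) (b := b) (t := n) (y := i) (by omega)
  rw [h1] at hSi
  simp at hSi
  have hSi1 := S_succ (n := n) (b := b) (t := n) (y := i + 1) hi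
  rw [hbf] at hSi1
  simp at hSi1
  have hSi2 : S n b n (i + 1 + 1) ≤ n - (i + 1 + 1) := S_le n (i + 1 + 1)
  have hB := (invAB hpair hfix n).2 (S n b n i) (i + 1) (by omega)
    (le_trans (by omega) (S_anti (Nat.zero_le i)))
    (by omega) (by omega)
  omega

end Step

end Core

end OddEvenNet
namespace OddEvenNet

section PermLayer

variable (n : ℕ)

/-- Extension of a permutation of `Fin n` to `ℕ` (by values, identity elsewhere). -/
def F (f : Equiv.Perm (Fin n)) (i : ℕ) : ℕ :=
  if h : i < n then (f ⟨i, h⟩ : ℕ) else i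

/-- The swap function of one compare-exchange round with parity `r`:
position `i` is swapped with `i+1` when `i % 2 = r % 2`, `i + 1 < n` and the
values are out of order. -/
def swf (f : Equiv.Perm (Fin n)) (r i : ℕ) : ℕ :=
  if i % 2 = r % 2 ∧ i + 1 < n ∧ F n f (i + 1) < F n f i then i + 1
  else if 1 ≤ i ∧ (i - 1) % 2 = r % 2 ∧ i < n ∧ F n f i < F n f (i - 1) then i - 1
  else i

variable {n}

lemma swf_swf (f : Equiv.Perm (Fin n)) (r i : ℕ) : swf n f r (swf n f r i) = i := by
  by_cases h1 : i % 2 = r % 2 ∧ i + 1 < n ∧ F n f (i + 1) < F n f i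
  · have e1 : swf n f r i = i + 1 := by unfold swf; rw [if_pos h1]
    have e2 : i + 1 - 1 = i := rfl
    rw [e1]
    unfold swf
    rw [if_neg (fun hc => by
      have := hc.1
      omega)]
    rw [if_pos ⟨by omega, by rw [e2]; exact h1.1, h1.2.1, by rw [e2]; exact h1.2.2⟩]
    exact e2
  · by_cases h2 : 1 ≤ i ∧ (i - 1) % 2 = r % 2 ∧ i < n ∧ F n f i < F n f (i - 1)
    · have e1 : swf n f r i = i - 1 := by unfold swf; rw [if_neg h1, if_pos h2]
      have e3 : i - 1 + 1 = i := by omega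
      rw [e1]
      unfold swf
      rw [if_pos ⟨h2.2.1, by rw [e3]; exact h2.2.2.1, by rw [e3]; exact h2.2.2.2⟩]
      exact e3
    · have e1 : swf n f r i = i := by unfold swf; rw [if_neg h1, if_neg h2]
      rw [e1]
      unfold swf
      rw [if_neg h1, if_neg h2]

lemma swf_lt (f : Equiv.Perm (Fin n)) (r : ℕ) {i : ℕ} (hi : i < n) :
    swf n f r i < n := by
  unfold swf
  split_ifs with h1 h2
  · exact h1.2.1
  · omega
  · exact hi

/-- One round of disjoint adjacent transpositions, as a permutation. -/
def roundPerm (f : Equiv.Perm (Fin n)) (r : ℕ) : Equiv.Perm (Fin n) :=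
  Function.Involutive.toPerm
    (fun i => ⟨swf n f r i, swf_lt f r i.isLt⟩)
    (fun i => Fin.ext (swf_swf f r i))

lemma roundPerm_val (f : Equiv.Perm (Fin n)) (r : ℕ) (i : Fin n) :
    ((roundPerm f r) i : ℕ) = swf n f r i := rfl

variable (π : Equiv.Perm (Fin n))

/-- The state after `t` rounds. -/
def gseq : ℕ → Equiv.Perm (Fin n)
  | 0 => π
  | t + 1 => gseq t * roundPerm (gseq t) (t + 1)

lemma F_step (t i : ℕ) (hi : i < n) :
    F n (gseq π (t + 1)) i = F n (gseq π t) (swf n (gseq π t) (t + 1) i) := by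
  have hsw : swf n (gseq π t) (t + 1) i < n := swf_lt _ _ hi
  unfold F
  rw [dif_pos hi, dif_pos hsw]
  show ((gseq π t * roundPerm (gseq π t) (t + 1)) ⟨i, hi⟩ : ℕ) = _
  rw [Equiv.Perm.mul_apply]
  congr 1

lemma F_ne (f : Equiv.Perm (Fin n)) {i j : ℕ} (hi : i < n) (hj : j < n)
    (hij : i ≠ j) : F n f i ≠ F n f j := by
  unfold F
  rw [dif_pos hi, dif_pos hj]
  intro hc
  exact hij (by simpa [Fin.ext_iff] using f.injective (Fin.ext hc))

/-- Thresholded 0-1 array of the evolving permutation. -/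
def bb (v t i : ℕ) : Bool := decide (i < n ∧ v ≤ F n (gseq π t) i)

lemma bb_pair (v : ℕ) : ∀ t i, i % 2 = (t + 1) % 2 → i + 1 < n →
    bb π v (t + 1) i = (bb π v t i && bb π v t (i + 1)) ∧
    bb π v (t + 1) (i + 1) = (bb π v t i || bb π v t (i + 1)) := by
  intro t i hp hi1
  have hi : i < n := by omega
  have hne : F n (gseq π t) i ≠ F n (gseq π t) (i + 1) :=
    F_ne _ hi hi1 (by omega)
  have hs1 := F_step π t i hi
  have hs2 := F_step π t (i + 1) hi1
  by_cases hc : F n (gseq π t) (i + 1) < F n (gseq π t) i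
  · have e1 : swf n (gseq π t) (t + 1) i = i + 1 := by
      unfold swf; rw [if_pos ⟨hp, hi1, hc⟩]
    have e2 : swf n (gseq π t) (t + 1) (i + 1) = i := by
      unfold swf
      rw [if_neg (fun hcc => by have := hcc.1; omega)]
      rw [if_pos ⟨by omega, by simpa using hp, hi1, by simpa using hc⟩]
      rfl
    rw [e1] at hs1; rw [e2] at hs2
    constructor
    · rw [Bool.eq_iff_iff]
      simp only [bb, Bool.and_eq_true, decide_eq_true_eq, hs1]
      omega
    · rw [Bool.eq_iff_iff]
      simp only [bb, Bool.or_eq_true, decide_eq_true_eq, hs2]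
      omega
  · have hlt : F n (gseq π t) i < F n (gseq π t) (i + 1) := by omega
    have e1 : swf n (gseq π t) (t + 1) i = i := by
      unfold swf
      rw [if_neg (fun hcc => by have := hcc.2.2; omega)]
      rw [if_neg (fun hcc => by have h := hcc.2.1; omega)]
    have e2 : swf n (gseq π t) (t + 1) (i + 1) = i + 1 := by
      unfold swf
      rw [if_neg (fun hcc => by have := hcc.1; omega)]
      rw [if_neg (fun hcc => by
        have h := hcc.2.2.2
        simp only [Nat.add_sub_cancel] at h
        omega)]
    rw [e1] at hs1; rw [e2] at hs2
    constructor
    · rw [Bool.eq_iff_iff]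
      simp only [bb, Bool.and_eq_true, decide_eq_true_eq, hs1]
      omega
    · rw [Bool.eq_iff_iff]
      simp only [bb, Bool.or_eq_true, decide_eq_true_eq, hs2]
      omega

lemma bb_fix (v : ℕ) : ∀ t i, ¬(i % 2 = (t + 1) % 2 ∧ i + 1 < n) →
    (∀ q, i = q + 1 → ¬(q % 2 = (t + 1) % 2 ∧ q + 1 < n)) →
    bb π v (t + 1) i = bb π v t i := by
  intro t i hA hB
  by_cases hi : i < n
  · have e1 : swf n (gseq π t) (t + 1) i = i := by
      unfold swf
      rw [if_neg (fun hcc => hA ⟨hcc.1, hcc.2.1⟩)]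
      rw [if_neg (fun hcc => hB (i - 1) (by omega) ⟨hcc.2.1, by omega⟩)]
    have hs1 := F_step π t i hi
    rw [e1] at hs1
    simp only [bb, hs1]
  · simp only [bb]
    rw [decide_eq_decide]
    omega

end PermLayer

end OddEvenNet
namespace OddEvenNet

section Final

variable {n : ℕ} (π : Equiv.Perm (Fin n))

lemma bb_sorted (v i : ℕ) (hi : i + 1 < n) (h1 : bb π v n i = true) :
    bb π v n (i + 1) = true :=
  core_sorted (bb_pair π v) (bb_fix π v) i hi h1

lemma gn_adj (i : Fin n) (hi : (i : ℕ) + 1 < n) :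
    gseq π n i < gseq π n ⟨(i : ℕ) + 1, hi⟩ := by
  have hFi : F n (gseq π n) (i : ℕ) = ((gseq π n) i : ℕ) := by
    unfold F
    rw [dif_pos i.isLt]
  have hFe : F n (gseq π n) ((i : ℕ) + 1) = ((gseq π n) ⟨(i : ℕ) + 1, hi⟩ : ℕ) := by
    unfold F
    rw [dif_pos hi]
  have h1 : bb π ((gseq π n) i : ℕ) n (i : ℕ) = true := by
    simp only [bb, decide_eq_true_eq]
    exact ⟨i.isLt, le_of_eq hFi.symm⟩
  have h2 := bb_sorted π _ (i : ℕ) hi h1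
  simp only [bb, decide_eq_true_eq] at h2
  have hle := h2.2
  have hne : F n (gseq π n) (i : ℕ) ≠ F n (gseq π n) ((i : ℕ) + 1) :=
    F_ne _ i.isLt hi (by omega)
  rw [Fin.lt_def]
  omega

lemma gn_strictMono : StrictMono (gseq π n) := by
  have key : ∀ d (a b : Fin n), (b : ℕ) = (a : ℕ) + d + 1 →
      gseq π n a < gseq π n b := by
    intro d
    induction d with
    | zero =>
        intro a b hab
        have hi : (a : ℕ) + 1 < n := by have := b.isLt; omega
        have := gn_adj π a hi
        have hb : b = ⟨(a : ℕ) + 1, hi⟩ := Fin.ext (by simp; omega)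
        rwa [hb]
    | succ d ih =>
        intro a b hab
        have hm : (a : ℕ) + d + 1 < n := by have := b.isLt; omega
        have h1 := ih a ⟨(a : ℕ) + d + 1, hm⟩ rfl
        have hi : ((⟨(a : ℕ) + d + 1, hm⟩ : Fin n) : ℕ) + 1 < n := by
          have := b.isLt; simpa using (by omega : (a : ℕ) + d + 1 + 1 < n)
        have h2 := gn_adj π ⟨(a : ℕ) + d + 1, hm⟩ hi
        have hb : b = ⟨(a : ℕ) + d + 1 + 1, by omega⟩ := Fin.ext (by simpa using (by omega : (b : ℕ) = (a : ℕ) + d + 1 + 1))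
        rw [hb]
        exact lt_trans h1 h2
  intro a b hab
  rw [Fin.lt_def] at hab
  exact key ((b : ℕ) - (a : ℕ) - 1) a b (by omega)

lemma le_apply_of_strictMono (σ : Equiv.Perm (Fin n)) (hσ : StrictMono σ) :
    ∀ i : Fin n, (i : ℕ) ≤ (σ i : ℕ) := by
  have key : ∀ k (i : Fin n), (i : ℕ) = k → k ≤ (σ i : ℕ) := by
    intro k
    induction k with
    | zero => intro i _; omega
    | succ k ih =>
        intro i hik
        have hk : k < n := by have := i.isLt; omega
        have h1 := ih ⟨k, hk⟩ rfl
        have h2 : σ ⟨k, hk⟩ < σ i := hσ (by rw [Fin.lt_def]; simp; omega)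
        rw [Fin.lt_def] at h2
        omega
  exact fun i => key (i : ℕ) i rfl

lemma gn_eq_one : gseq π n = 1 := by
  set σ := gseq π n with hσ
  have hmono := gn_strictMono π
  have hmono' : StrictMono ⇑σ.symm := by
    intro a b hab
    rw [← hmono.lt_iff_lt]
    simpa [hσ] using hab
  apply Equiv.ext
  intro i
  have h1 := le_apply_of_strictMono σ hmono i
  have h2 := le_apply_of_strictMono σ.symm hmono' (σ i)
  rw [Equiv.symm_apply_apply] at h2
  have : σ i = i := Fin.ext (by omega)
  simpa using this

/-- The rounds. -/
def tau : ℕ → Equiv.Perm (Fin n)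
  | 0 => 1
  | t + 1 => roundPerm (gseq π t) (t + 1)

lemma gseq_eq_prod : ∀ t, gseq π t =
    π * ((List.range t).map (fun k => tau π (k + 1))).prod := by
  intro t
  induction t with
  | zero => simp [gseq]
  | succ t ih =>
      have h0 : gseq π (t + 1) = gseq π t * tau π (t + 1) := rfl
      rw [h0, ih, List.range_succ, List.map_append, List.prod_append, mul_assoc]
      simp

lemma tau_invol (k : ℕ) (i : Fin n) : tau π k (tau π k i) = i := by
  match k with
  | 0 => simp [tau]
  | t + 1 =>
      apply Fin.ext
      show swf n (gseq π t) (t + 1) (swf n (gseq π t) (t + 1) (i : ℕ)) = (i : ℕ)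
      exact swf_swf _ _ _

lemma tau_inv (k : ℕ) : (tau π k)⁻¹ = tau π k := by
  have : tau π k * tau π k = 1 := Equiv.ext fun i => by
    simpa using tau_invol π k i
  exact inv_eq_of_mul_eq_one_right this

lemma prod_reverse_of_invol :
    ∀ (l : List (Equiv.Perm (Fin n))), (∀ x ∈ l, x⁻¹ = x) →
      l.prod⁻¹ = l.reverse.prod := by
  intro l
  induction l with
  | nil => simp
  | cons a l ih =>
      intro h
      rw [List.prod_cons, mul_inv_rev, List.reverse_cons, List.prod_append,
        ih (fun x hx => h x (List.mem_cons_of_mem a hx)), h a List.mem_cons_self,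
        List.prod_singleton]

end Final

end OddEvenNet

/-- Correctness of odd–even transposition sorting: every permutation `π` of
`Fin n` factors as `π = τ_n ∘ ⋯ ∘ τ₂ ∘ τ₁`, where each round `τ_k` is a product of
disjoint adjacent transpositions of alternating parity: `τ_k` is an involution
moving any element `i` only to `i−1` or `i+1`, and in round `k` only pairs
`(i, i+1)` with `i ≡ k (mod 2)` are swapped. -/
theorem stmt16 (n : ℕ) (hn : 1 ≤ n) (π : Equiv.Perm (Fin n)) :
    ∃ τ : ℕ → Equiv.Perm (Fin n),
      (∀ k, 1 ≤ k → k ≤ n →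
        (∀ i, τ k (τ k i) = i) ∧
        (∀ i : Fin n, τ k i = i ∨ ((τ k i : ℕ) = (i : ℕ) + 1) ∨
          ((i : ℕ) = (τ k i : ℕ) + 1)) ∧
        (∀ i : Fin n, (τ k i : ℕ) = (i : ℕ) + 1 → (i : ℕ) % 2 = k % 2)) ∧
      π = (((List.range n).map (fun k => τ (k + 1))).reverse).prod := by
  classical
  refine ⟨OddEvenNet.tau π, ?_, ?_⟩
  · intro k hk1 hkn
    obtain ⟨t, rfl⟩ : ∃ t, k = t + 1 := ⟨k - 1, by omega⟩
    refine ⟨OddEvenNet.tau_invol π (t + 1), ?_, ?_⟩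
    · intro i
      have hval : (OddEvenNet.tau π (t + 1) i : ℕ) =
          OddEvenNet.swf n (OddEvenNet.gseq π t) (t + 1) (i : ℕ) := rfl
      rw [hval]
      unfold OddEvenNet.swf
      split_ifs with h1 h2
      · right; left; rfl
      · right; right; omega
      · left
        exact Fin.ext (by rw [hval]; unfold OddEvenNet.swf; rw [if_neg h1, if_neg h2])
    · intro i hmove
      have hval : (OddEvenNet.tau π (t + 1) i : ℕ) =
          OddEvenNet.swf n (OddEvenNet.gseq π t) (t + 1) (i : ℕ) := rfl
      rw [hval] at hmove
      unfold OddEvenNet.swf at hmove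
      split_ifs at hmove with h1 h2
      · exact h1.1
      · omega
      · omega
  · have h1 := OddEvenNet.gseq_eq_prod π n
    rw [OddEvenNet.gn_eq_one π] at h1
    have h2 : π⁻¹ = ((List.range n).map (fun k => OddEvenNet.tau π (k + 1))).prod := by
      rw [inv_eq_of_mul_eq_one_right h1.symm]
    calc π = (π⁻¹)⁻¹ := by simp
      _ = _ := by
          rw [h2, OddEvenNet.prod_reverse_of_invol _ (by
            intro x hx
            obtain ⟨k, -, rfl⟩ := List.mem_map.mp hx
            exact OddEvenNet.tau_inv π (k + 1))]
end
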